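/- arXiv:math/0502241 — 5 statements merged into one kernel-verified Lean document; each statement's English description precedes it below -/
import Mathlib

section
/- Let B be a von Neumann algebra on a complex Hilbert space G, let E ⊆ B(G,H) be a concrete von Neumann B-module, and let ρ' : B' → B(H) be its commutant lifting. Then E = {y ∈ B(G,H) : ρ'(b') ∘ y = y ∘ b' for all b' ∈ B'}, i.e., E coincides with the space of intertwiners of ρ' and the identity representation of B'. -/
noncomputable section

variable {G H K : Type*}
  [NormedAddCommGroup G] [InnerProductSpace ℂ G] [CompleteSpace G]
  [NormedAddCommGroup H] [InnerProductSpace ℂ H] [CompleteSpace H]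
  [NormedAddCommGroup K] [InnerProductSpace ℂ K] [CompleteSpace K]

/-- The weak operator topology on `G →L[ℂ] H`: the coarsest topology making all the maps
`T ↦ ⟨h, T g⟩` continuous. -/
def wot (G H : Type*) [NormedAddCommGroup G] [InnerProductSpace ℂ G]
    [NormedAddCommGroup H] [InnerProductSpace ℂ H] : TopologicalSpace (G →L[ℂ] H) :=
  ⨅ p : G × H, TopologicalSpace.induced
    (fun T : G →L[ℂ] H => (inner ℂ p.2 (T p.1) : ℂ)) inferInstance

/-- The set `{x g : x ∈ E, g ∈ G}` spans a dense subspace of `H`. -/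
def SpansDensely (E : Set (G →L[ℂ] H)) : Prop :=
  Dense ((Submodule.span ℂ {h : H | ∃ x ∈ E, ∃ g : G, x g = h} : Submodule ℂ H) : Set H)

/-- `E ⊆ B(G,H)` is a concrete von Neumann `B`-module: a complex linear subspace, stable under
composition with elements of `B` from the right, with `x* ∘ y ∈ B` for all `x, y ∈ E`, acting
nondegenerately on `G`, and closed in the weak operator topology. -/
structure IsConcreteVNModule (B : VonNeumannAlgebra G) (E : Set (G →L[ℂ] H)) : Prop where
  zero_mem : (0 : G →L[ℂ] H) ∈ E
  add_mem : ∀ x ∈ E, ∀ y ∈ E, x + y ∈ E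
  smul_mem : ∀ (c : ℂ), ∀ x ∈ E, c • x ∈ E
  comp_mem : ∀ x ∈ E, ∀ b ∈ B, x.comp b ∈ E
  adjoint_comp_mem : ∀ x ∈ E, ∀ y ∈ E, (ContinuousLinearMap.adjoint x).comp y ∈ B
  dense : SpansDensely E
  isClosed : @IsClosed _ (wot G H) E

/-- A map `ρ : B(G) → B(H)` restricts on the subset `S ⊆ B(G)` to a normal unital
`*`-homomorphism: it is linear, multiplicative and star-preserving on `S`, unital, and its
restriction to the closed unit ball of `S` is continuous from the weak operator topology of
`B(G)` to the weak operator topology of `B(H)`. -/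
structure IsNormalUnitalStarHom (S : Set (G →L[ℂ] G)) (ρ : (G →L[ℂ] G) → (H →L[ℂ] H)) :
    Prop where
  map_add : ∀ a ∈ S, ∀ b ∈ S, ρ (a + b) = ρ a + ρ b
  map_smul : ∀ (c : ℂ), ∀ a ∈ S, ρ (c • a) = c • ρ a
  map_mul : ∀ a ∈ S, ∀ b ∈ S, ρ (a * b) = ρ a * ρ b
  map_star : ∀ a ∈ S, ρ (star a) = star (ρ a)
  map_one : ρ 1 = 1
  normal : @Continuous {b : G →L[ℂ] G // b ∈ S ∧ ‖b‖ ≤ 1} (H →L[ℂ] H)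
    (TopologicalSpace.induced (fun b => b.1) (wot G G)) (wot H H) (fun b => ρ b.1)

/-- The space of intertwiners: `x ∈ B(G,H)` with `ρ(b') ∘ x = x ∘ b'` for all `b' ∈ S`. -/
def intertwinerSpace (S : Set (G →L[ℂ] G)) (ρ : (G →L[ℂ] G) → (H →L[ℂ] H)) :
    Set (G →L[ℂ] H) :=
  {x | ∀ b' ∈ S, (ρ b').comp x = x.comp b'}


open scoped ComplexInnerProductSpace

namespace Stmt3Aux

variable {G H : Type*}
  [NormedAddCommGroup G] [InnerProductSpace ℂ G] [CompleteSpace G]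
  [NormedAddCommGroup H] [InnerProductSpace ℂ H] [CompleteSpace H]

local notation "ad" => ContinuousLinearMap.adjoint

lemma dense_kill {E : Set (G →L[ℂ] H)} (hd : SpansDensely E) {v : H}
    (hv : ∀ x ∈ E, ∀ g : G, ⟪x g, v⟫ = 0) : v = 0 := by
  set U : Submodule ℂ H := Submodule.span ℂ {h : H | ∃ x ∈ E, ∃ g : G, x g = h} with hU
  have htop : U.topologicalClosure = ⊤ :=
    Submodule.dense_iff_topologicalClosure_eq_top.mp hd
  have horth : v ∈ Uᗮ := by
    rw [Submodule.mem_orthogonal]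
    intro u hu
    induction hu using Submodule.span_induction with
    | mem w hw => obtain ⟨x, hx, g, rfl⟩ := hw; exact hv x hx g
    | zero => simp
    | add a b _ _ iha ihb => rw [inner_add_left, iha, ihb, add_zero]
    | smul c a _ iha => rw [inner_smul_left, iha, mul_zero]
  rw [Submodule.topologicalClosure_eq_top_iff.mp htop] at horth
  simpa using horth

lemma dense_sep {E : Set (G →L[ℂ] H)} (hd : SpansDensely E) {u w : H}
    (huv : ∀ x ∈ E, ∀ g : G, ⟪x g, u⟫ = ⟪x g, w⟫) : u = w := by
  have : u - w = 0 := by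
    apply dense_kill hd
    intro x hx g
    rw [inner_sub_right, huv x hx g, sub_self]
  exact sub_eq_zero.mp this

lemma nondeg {E : Set (G →L[ℂ] H)} (hd : SpansDensely E) {v : H}
    (hv : ∀ x ∈ E, ad x v = 0) : v = 0 := by
  apply dense_kill hd
  intro x hx g
  rw [← ContinuousLinearMap.adjoint_inner_right, hv x hx, inner_zero_right]

lemma nondeg2 {E : Set (G →L[ℂ] H)} (hd : SpansDensely E) {v : H}
    (hv : ∀ x ∈ E, ∀ x' ∈ E, x (ad x' v) = 0) : v = 0 := by
  apply nondeg hd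
  intro x hx
  have h0 : ⟪(ad x) v, (ad x) v⟫ = 0 := by
    rw [ContinuousLinearMap.adjoint_inner_left, hv x hx x hx, inner_zero_right]
  exact inner_self_eq_zero.mp h0

variable {B : VonNeumannAlgebra G} {E : Set (G →L[ℂ] H)}
  {ρ' : (G →L[ℂ] G) → (H →L[ℂ] H)}

lemma adjoint_rho (hE : IsConcreteVNModule B E)
    (hρ : ∀ b' ∈ B.commutant, ∀ x ∈ E, (ρ' b').comp x = x.comp b')
    {b' : G →L[ℂ] G} (hb' : b' ∈ B.commutant) :
    ad (ρ' b') = ρ' (star b') := by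
  have hst : star b' ∈ B.commutant := star_mem hb'
  apply ContinuousLinearMap.ext_on hE.dense
  rintro _ ⟨x, hx, g, rfl⟩
  apply dense_sep hE.dense
  intro x' hx' g'
  have hax : (ad x').comp x ∈ B := hE.adjoint_comp_mem x' hx' x hx
  have hcomm : ((ad x').comp x) * (star b') = (star b') * ((ad x').comp x) :=
    VonNeumannAlgebra.mem_commutant_iff.mp hst _ hax
  have e1 : (ρ' b') (x' g') = x' (b' g') := by
    have := hρ b' hb' x' hx'
    exact DFunLike.congr_fun this g'
  have e2 : (ρ' (star b')) (x g) = x ((star b') g) := by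
    have := hρ (star b') hst x hx
    exact DFunLike.congr_fun this g
  calc ⟪x' g', (ad (ρ' b')) (x g)⟫
      = ⟪(ρ' b') (x' g'), x g⟫ := ContinuousLinearMap.adjoint_inner_right _ _ _
    _ = ⟪x' (b' g'), x g⟫ := by rw [e1]
    _ = ⟪b' g', (ad x') (x g)⟫ := (ContinuousLinearMap.adjoint_inner_right x' _ _).symm
    _ = ⟪g', (ad b') (((ad x').comp x) g)⟫ := by
        rw [ContinuousLinearMap.adjoint_inner_right b']
        rfl
    _ = ⟪g', (((ad x').comp x) * (star b')) g⟫ := by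
        rw [hcomm]
        rw [ContinuousLinearMap.mul_apply, ContinuousLinearMap.star_eq_adjoint]
    _ = ⟪g', (ad x') (x ((star b') g))⟫ := by
        rw [ContinuousLinearMap.mul_apply]
        rfl
    _ = ⟪x' g', x ((star b') g)⟫ := ContinuousLinearMap.adjoint_inner_right x' _ _
    _ = ⟪x' g', (ρ' (star b')) (x g)⟫ := by rw [e2]

lemma comp_y_mem (hE : IsConcreteVNModule B E)
    (hρ : ∀ b' ∈ B.commutant, ∀ x ∈ E, (ρ' b').comp x = x.comp b')
    {y : G →L[ℂ] H} (hy : ∀ b' ∈ B.commutant, (ρ' b').comp y = y.comp b')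
    {x : G →L[ℂ] H} (hx : x ∈ E) :
    (ad x).comp y ∈ B := by
  rw [← B.commutant_commutant]
  rw [VonNeumannAlgebra.mem_commutant_iff]
  intro b' hb'
  have hst : star b' ∈ B.commutant := star_mem hb'
  have h1 : b'.comp (ad x) = (ad x).comp (ρ' b') := by
    have e1 : x.comp (star b') = (ρ' (star b')).comp x := (hρ _ hst x hx).symm
    have e2 : b'.comp (ad x) = ad (x.comp (star b')) := by
      rw [ContinuousLinearMap.adjoint_comp, ContinuousLinearMap.star_eq_adjoint,
        ContinuousLinearMap.adjoint_adjoint]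
    rw [e2, e1, ContinuousLinearMap.adjoint_comp, adjoint_rho hE hρ hst, star_star]
  show b'.comp ((ad x).comp y) = ((ad x).comp y).comp b'
  rw [← ContinuousLinearMap.comp_assoc, h1, ContinuousLinearMap.comp_assoc, hy b' hb',
    ← ContinuousLinearMap.comp_assoc]

instance pilp_complete (ι : Type*) : CompleteSpace (PiLp 2 fun _ : ι => H) := inferInstance

/-- Package a tuple of vectors as an element of `PiLp 2`. -/
def tup {ι : Type*} (f : ι → H) : PiLp 2 fun _ : ι => H :=
  (WithLp.equiv 2 (∀ _ : ι, H)).symm f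

@[simp] lemma tup_apply {ι : Type*} (f : ι → H) (i : ι) : tup f i = f i := rfl

lemma pilp_norm_apply_le {ι : Type*} [Fintype ι] (v : PiLp 2 fun _ : ι => H) (i : ι) :
    ‖v i‖ ≤ ‖v‖ := by
  rw [PiLp.norm_eq_of_L2]
  rw [show ‖v i‖ = Real.sqrt (‖v i‖ ^ 2) from (Real.sqrt_sq (norm_nonneg _)).symm]
  apply Real.sqrt_le_sqrt
  exact Finset.single_le_sum (fun j _ => sq_nonneg ‖v j‖) (Finset.mem_univ i)

lemma claimA (hE : IsConcreteVNModule B E)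
    (hρ : ∀ b' ∈ B.commutant, ∀ x ∈ E, (ρ' b').comp x = x.comp b')
    {y : G →L[ℂ] H} (hy : ∀ b' ∈ B.commutant, (ρ' b').comp y = y.comp b')
    {ι : Type*} [Fintype ι] (g : ι → G) :
    (tup fun i => y (g i)) ∈
      closure {v : PiLp 2 fun _ : ι => H | ∃ x ∈ E, v = tup fun i => x (g i)} := by
  classical
  set ξ : PiLp 2 fun _ : ι => H := tup (fun i => y (g i)) with hξ
  set Sset : Set (PiLp 2 fun _ : ι => H) :=
    {v | ∃ x ∈ E, ∃ x' ∈ E, v = tup fun i => x ((ad x') (ξ i))} with hSset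
  set M : Submodule ℂ (PiLp 2 fun _ : ι => H) := Submodule.span ℂ Sset with hM
  set K : Submodule ℂ (PiLp 2 fun _ : ι => H) := M.topologicalClosure with hK
  haveI : CompleteSpace K := M.isClosed_topologicalClosure.completeSpace_coe
  set pr : PiLp 2 fun _ : ι => H := (K.orthogonalProjectionOnto ξ : PiLp 2 fun _ : ι => H) with hpr
  set μ : PiLp 2 fun _ : ι => H := ξ - pr with hμdef
  have hμ : μ ∈ Kᗮ := Submodule.sub_starProjection_mem_orthogonal (K := K) ξ
  -- adjoint identity for diagonal operators
  have adjD : ∀ (x x' : G →L[ℂ] H) (u v : PiLp 2 fun _ : ι => H),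
      ⟪(tup fun i => x ((ad x') (u i))), v⟫ =
      ⟪u, (tup fun i => x' ((ad x) (v i)))⟫ := by
    intro x x' u v
    rw [PiLp.inner_apply, PiLp.inner_apply]
    refine Finset.sum_congr rfl fun i _ => ?_
    simp only [tup_apply]
    rw [← ContinuousLinearMap.adjoint_inner_right x,
      ContinuousLinearMap.adjoint_inner_left]
  -- M is invariant under diagonal operators
  have hMinv : ∀ x ∈ E, ∀ x' ∈ E, ∀ m ∈ M, (tup fun i => x ((ad x') (m i))) ∈ M := by
    intro x hx x' hx' m hm
    induction hm using Submodule.span_induction with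
    | mem w hw =>
        obtain ⟨z, hz, z', hz', rfl⟩ := hw
        apply Submodule.subset_span
        refine ⟨x.comp ((ad x').comp z), hE.comp_mem x hx _ (hE.adjoint_comp_mem x' hx' z hz),
          z', hz', ?_⟩
        ext i
        simp [ContinuousLinearMap.comp_apply]
    | zero =>
        have : (tup fun i => x ((ad x') ((0 : PiLp 2 fun _ : ι => H) i))) = (0 : PiLp 2 fun _ : ι => H) := by
          ext i
          simp [PiLp.zero_apply]
        rw [this]; exact M.zero_mem
    | add a b _ _ iha ihb =>
        have : (tup fun i => x ((ad x') ((a + b) i)))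
            = (tup fun i => x ((ad x') (a i)))
              + (tup fun i => x ((ad x') (b i))) := by
          ext i
          simp [PiLp.add_apply]
        rw [this]; exact M.add_mem iha ihb
    | smul c a _ iha =>
        have : (tup fun i => x ((ad x') ((c • a) i)))
            = c • (tup fun i => x ((ad x') (a i))) := by
          ext i
          simp [PiLp.smul_apply]
        rw [this]; exact M.smul_mem c iha
  -- K-orthogonal is invariant under diagonal operators
  have hKorth : ∀ x ∈ E, ∀ x' ∈ E, ∀ ν ∈ Kᗮ,
      (tup fun i => x ((ad x') (ν i))) ∈ Kᗮ := by
    intro x hx x' hx' ν hν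
    rw [Submodule.mem_orthogonal]
    intro u hu
    have hset : (K : Set (PiLp 2 fun _ : ι => H)) ⊆
        {u | ⟪u, (tup fun i => x ((ad x') (ν i)))⟫ = 0} := by
      rw [hK, Submodule.topologicalClosure_coe]
      apply closure_minimal
      · intro m hm
        show ⟪m, (tup fun i => x ((ad x') (ν i)))⟫ = 0
        rw [← adjD x' x m ν]
        exact (Submodule.mem_orthogonal _ _).mp hν _
          (M.le_topologicalClosure (hMinv x' hx' x hx m hm))
      · exact isClosed_eq (continuous_id.inner continuous_const) continuous_const
    exact hset hu
  -- K is invariant for the projection vector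
  have hKinv_pr : ∀ x ∈ E, ∀ x' ∈ E,
      (tup fun i => x ((ad x') (pr i))) ∈ K := by
    intro x hx x' hx'
    rw [← Submodule.orthogonal_orthogonal K, Submodule.mem_orthogonal]
    intro ν hν
    rw [← adjD x' x ν pr]
    exact (Submodule.mem_orthogonal' _ _).mp (hKorth x' hx' x hx ν hν) _ (SetLike.coe_mem _)
  -- diagonal image of μ vanishes
  have hDμ : ∀ x ∈ E, ∀ x' ∈ E,
      (tup fun i => x ((ad x') (μ i))) = 0 := by
    intro x hx x' hx'
    have hin : (tup fun i => x ((ad x') (μ i))) ∈ K := by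
      have heq : (tup fun i => x ((ad x') (μ i)))
          = (tup fun i => x ((ad x') (ξ i)))
            - (tup fun i => x ((ad x') (pr i))) := by
        ext i
        rw [hμdef]
        simp [PiLp.sub_apply, map_sub]
      rw [heq]
      refine K.sub_mem ?_ (hKinv_pr x hx x' hx')
      exact M.le_topologicalClosure (Submodule.subset_span ⟨x, hx, x', hx', rfl⟩)
    have hout : (tup fun i => x ((ad x') (μ i))) ∈ Kᗮ :=
      hKorth x hx x' hx' μ hμ
    have hzero : ⟪(tup fun i => x ((ad x') (μ i))),
        (tup fun i => x ((ad x') (μ i)))⟫ = 0 :=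
      (Submodule.mem_orthogonal _ _).mp hout _ hin
    exact inner_self_eq_zero.mp hzero
  -- μ = 0
  have hμ0 : μ = 0 := by
    ext i
    refine nondeg2 hE.dense fun x hx x' hx' => ?_
    have := congrArg (fun v : PiLp 2 (fun _ : ι => H) => v i) (hDμ x hx x' hx')
    simpa [PiLp.zero_apply] using this
  have hξK : ξ ∈ K := by
    have hp : ξ = pr := by
      have := sub_eq_zero.mp hμ0
      exact this
    rw [hp]
    exact SetLike.coe_mem _
  -- conclude
  have hsub : (M : Set (PiLp 2 fun _ : ι => H)) ⊆
      {v : PiLp 2 fun _ : ι => H | ∃ x ∈ E, v = tup fun i => x (g i)} := by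
    set T : Submodule ℂ (PiLp 2 fun _ : ι => H) :=
      { carrier := {v : PiLp 2 fun _ : ι => H | ∃ x ∈ E, v = tup fun i => x (g i)}
        zero_mem' := ⟨0, hE.zero_mem, by ext i; simp [PiLp.zero_apply]⟩
        add_mem' := by
          rintro a b ⟨xa, hxa, rfl⟩ ⟨xb, hxb, rfl⟩
          exact ⟨xa + xb, hE.add_mem xa hxa xb hxb, by ext i; simp [PiLp.add_apply]⟩
        smul_mem' := by
          rintro c a ⟨xa, hxa, rfl⟩
          exact ⟨c • xa, hE.smul_mem c xa hxa, by ext i; simp [PiLp.smul_apply]⟩ } with hT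
    have : M ≤ T := Submodule.span_le.mpr ?_
    · exact this
    · rintro w ⟨x, hx, x', hx', rfl⟩
      exact ⟨x.comp ((ad x').comp y), hE.comp_mem x hx _ (comp_y_mem hE hρ hy hx'), by
        ext i; simp [ContinuousLinearMap.comp_apply, hξ]⟩
  have hcl : (K : Set (PiLp 2 fun _ : ι => H)) ⊆
      closure {v : PiLp 2 fun _ : ι => H | ∃ x ∈ E, v = tup fun i => x (g i)} := by
    rw [hK, Submodule.topologicalClosure_coe]
    exact closure_mono hsub
  exact hcl hξK

lemma wot_nhds (y : G →L[ℂ] H) :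
    @nhds _ (wot G H) y = ⨅ p : G × H,
      Filter.comap (fun T : G →L[ℂ] H => (inner ℂ p.2 (T p.1) : ℂ))
        (nhds ((inner ℂ p.2 (y p.1) : ℂ))) := by
  unfold wot
  simp only [wot, nhds_iInf, nhds_induced]

end Stmt3Aux


/-- a concrete von Neumann `B`-module coincides with the intertwiner space of its
commutant lifting. -/
theorem stmt3 (B : VonNeumannAlgebra G) (E : Set (G →L[ℂ] H))
    (hE : IsConcreteVNModule B E)
    (ρ' : (G →L[ℂ] G) → (H →L[ℂ] H))
    (hρ : ∀ b' ∈ B.commutant, ∀ x ∈ E, (ρ' b').comp x = x.comp b') :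
    E = {y : G →L[ℂ] H | ∀ b' ∈ B.commutant, (ρ' b').comp y = y.comp b'} := by
  refine Set.Subset.antisymm (fun x hx b' hb' => hρ b' hb' x hx) ?_
  intro y hy
  simp only [Set.mem_setOf_eq] at hy
  have hmem : y ∈ @closure _ (wot G H) E := by
    letI : TopologicalSpace (G →L[ℂ] H) := wot G H
    rw [mem_closure_iff]
    intro o ho hyo
    have hno : o ∈ nhds y := ho.mem_nhds hyo
    rw [show (nhds y : Filter (G →L[ℂ] H)) = _ from Stmt3Aux.wot_nhds y] at hno
    rcases Filter.mem_iInf.mp hno with ⟨I, Ifin, V, hV, rfl⟩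
    haveI : Fintype I := Ifin.fintype
    have hball : ∀ i : I, ∃ ε > (0:ℝ), ∀ T : G →L[ℂ] H,
        ‖(inner ℂ (i:G×H).2 (T (i:G×H).1) : ℂ) - (inner ℂ (i:G×H).2 (y (i:G×H).1) : ℂ)‖ < ε →
          T ∈ V i := by
      intro i
      rcases Filter.mem_comap.mp (hV i) with ⟨t, ht, hsub⟩
      rcases Metric.mem_nhds_iff.mp ht with ⟨ε, hε, hbl⟩
      refine ⟨ε, hε, fun T hT => hsub (hbl ?_)⟩
      rwa [Metric.mem_ball, dist_eq_norm]
    choose ε hε hεball using hball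
    have hA := Stmt3Aux.claimA hE hρ hy (fun i : I => (i : G×H).1)
    rcases isEmpty_or_nonempty I with hemp | hne
    · refine ⟨0, ?_, hE.zero_mem⟩
      rw [Set.iInter_of_empty]
      trivial
    · set δ : ℝ := (Finset.univ : Finset I).inf' Finset.univ_nonempty
        (fun i => ε i / (‖(i:G×H).2‖ + 1)) with hδ
      have hδpos : 0 < δ := by
        rw [hδ, Finset.lt_inf'_iff]
        intro i _
        exact div_pos (hε i) (by positivity)
      rcases Metric.mem_closure_iff.mp hA δ hδpos with ⟨v, hvT, hdist⟩
      rcases hvT with ⟨x, hxE, rfl⟩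
      refine ⟨x, ?_, hxE⟩
      rw [Set.mem_iInter]
      intro i
      apply hεball i
      have hcomp : ‖x ((i:G×H).1) - y ((i:G×H).1)‖ ≤ δ →
          ‖(inner ℂ (i:G×H).2 (x (i:G×H).1) : ℂ) - (inner ℂ (i:G×H).2 (y (i:G×H).1) : ℂ)‖
            ≤ ‖(i:G×H).2‖ * δ := by
        intro hb
        rw [← inner_sub_right]
        calc ‖(inner ℂ (i:G×H).2 (x (i:G×H).1 - y (i:G×H).1) : ℂ)‖
            ≤ ‖(i:G×H).2‖ * ‖x ((i:G×H).1) - y ((i:G×H).1)‖ := norm_inner_le_norm _ _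
          _ ≤ ‖(i:G×H).2‖ * δ := by
              exact mul_le_mul_of_nonneg_left hb (norm_nonneg _)
      have hvec : ‖x ((i:G×H).1) - y ((i:G×H).1)‖ ≤ δ := by
        have h1 : ‖((Stmt3Aux.tup fun j : I => y ((j:G×H).1))) -
            ((Stmt3Aux.tup fun j : I => x ((j:G×H).1)))‖ < δ := by
          rw [← dist_eq_norm]
          exact hdist
        have h2 := Stmt3Aux.pilp_norm_apply_le
          (((Stmt3Aux.tup fun j : I => y ((j:G×H).1))) -
            ((Stmt3Aux.tup fun j : I => x ((j:G×H).1)))) i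
        rw [PiLp.sub_apply] at h2
        rw [← norm_sub_rev]
        exact le_of_lt (lt_of_le_of_lt h2 h1)
      have hfinal := hcomp hvec
      have hlt : ‖(i:G×H).2‖ * δ < ε i := by
        have hδle : δ ≤ ε i / (‖(i:G×H).2‖ + 1) := by
          rw [hδ]
          exact Finset.inf'_le _ (Finset.mem_univ i)
        calc ‖(i:G×H).2‖ * δ ≤ ‖(i:G×H).2‖ * (ε i / (‖(i:G×H).2‖ + 1)) :=
              mul_le_mul_of_nonneg_left hδle (norm_nonneg _)
          _ < ε i := by
              rw [← mul_div_assoc, div_lt_iff₀ (by positivity : (0:ℝ) < ‖(i:G×H).2‖ + 1)]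
              nlinarith [hε i, norm_nonneg (i:G×H).2]
      exact lt_of_le_of_lt hfinal hlt
  letI : TopologicalSpace (G →L[ℂ] H) := wot G H
  exact hE.isClosed.closure_subset hmem
end
end

section
/- Let B be a von Neumann algebra on a complex Hilbert space G, let E ⊆ B(G,H) be a concrete von Neumann B-module, and let ρ' : B' → B(H) be its commutant lifting. Then {a ∈ B(H) : a∘x ∈ E and a*∘x ∈ E for all x ∈ E} = {a ∈ B(H) : a ρ'(b') = ρ'(b') a for all b' ∈ B'}; that is, the algebra of adjointable operators of E, realized inside B(H), equals the commutant of ρ'(B') in B(H). -/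
noncomputable section

variable {G H K : Type*}
  [NormedAddCommGroup G] [InnerProductSpace ℂ G] [CompleteSpace G]
  [NormedAddCommGroup H] [InnerProductSpace ℂ H] [CompleteSpace H]
  [NormedAddCommGroup K] [InnerProductSpace ℂ K] [CompleteSpace K]

namespace Stmt4Aux

open ContinuousLinearMap

variable {B : VonNeumannAlgebra G} {E : Set (G →L[ℂ] H)}

/-- If a vector of `H` is orthogonal to all `x g` with `x ∈ E`, it is zero. -/
lemma vec_eq_zero (hE : IsConcreteVNModule B E) {v : H}
    (h : ∀ x ∈ E, ∀ g : G, (inner ℂ (x g) v : ℂ) = 0) : v = 0 := by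
  have hd : Dense ((Submodule.span ℂ {h : H | ∃ x ∈ E, ∃ g : G, x g = h} :
      Submodule ℂ H) : Set H) := hE.dense
  refine hd.eq_zero_of_inner_right ℂ ?_
  rintro w (hw : w ∈ Submodule.span ℂ _)
  induction hw using Submodule.span_induction with
  | mem x hx => obtain ⟨x', hx', g, rfl⟩ := hx; exact h x' hx' g
  | zero => simp
  | add x y _ _ hx hy => rw [inner_add_left, hx, hy, add_zero]
  | smul c x _ hx => rw [inner_smul_left, hx, mul_zero]

/-- Continuous linear maps out of `H` agreeing on all `x g`, `x ∈ E`, agree. -/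
lemma clm_ext (hE : IsConcreteVNModule B E) {T S : H →L[ℂ] K}
    (h : ∀ x ∈ E, ∀ g : G, T (x g) = S (x g)) : T = S := by
  have hd : Dense ((Submodule.span ℂ {h : H | ∃ x ∈ E, ∃ g : G, x g = h} :
      Submodule ℂ H) : Set H) := hE.dense
  refine ContinuousLinearMap.ext_on hd ?_
  rintro h' ⟨x, hx, g, rfl⟩
  exact h x hx g

variable {ρ' : (G →L[ℂ] G) → (H →L[ℂ] H)}

/-- The commutant lifting is `*`-preserving. -/
lemma adjoint_rho (hE : IsConcreteVNModule B E)
    (hρ : ∀ b' ∈ B.commutant, ∀ x ∈ E, (ρ' b').comp x = x.comp b')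
    {b' : G →L[ℂ] G} (hb' : b' ∈ B.commutant) :
    ContinuousLinearMap.adjoint (ρ' b') = ρ' (star b') := by
  have hsb' : star b' ∈ B.commutant := star_mem hb'
  refine clm_ext hE fun x hx g => ?_
  have key : ∀ y ∈ E, ∀ g' : G,
      (inner ℂ (y g') (ContinuousLinearMap.adjoint (ρ' b') (x g) - ρ' (star b') (x g)) : ℂ) = 0 := by
    intro y hy g'
    rw [inner_sub_right, sub_eq_zero]
    have h1 : (ρ' b') (y g') = y (b' g') := by
      have := congrArg (fun T : G →L[ℂ] H => T g') (hρ b' hb' y hy)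
      simpa using this
    have h2 : (ρ' (star b')) (x g) = x (star b' g) := by
      have := congrArg (fun T : G →L[ℂ] H => T g) (hρ (star b') hsb' x hx)
      simpa using this
    rw [adjoint_inner_right, h1, h2]
    have hbb : (ContinuousLinearMap.adjoint y).comp x ∈ B := hE.adjoint_comp_mem y hy x hx
    have hcomm : ((ContinuousLinearMap.adjoint y).comp x) * (star b')
        = (star b') * ((ContinuousLinearMap.adjoint y).comp x) :=
      VonNeumannAlgebra.mem_commutant_iff.mp hsb' _ hbb
    calc (inner ℂ (y (b' g')) (x g) : ℂ)
        = inner ℂ (b' g') ((ContinuousLinearMap.adjoint y) (x g)) :=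
          (adjoint_inner_right _ _ _).symm
      _ = inner ℂ g' ((ContinuousLinearMap.adjoint b') ((ContinuousLinearMap.adjoint y) (x g))) :=
          (adjoint_inner_right _ _ _).symm
      _ = inner ℂ g' ((star b') (((ContinuousLinearMap.adjoint y).comp x) g)) := by
          rw [← star_eq_adjoint]; rfl
      _ = inner ℂ g' ((star b' * ((ContinuousLinearMap.adjoint y).comp x)) g) := by
          rw [ContinuousLinearMap.mul_apply]
      _ = inner ℂ g' ((((ContinuousLinearMap.adjoint y).comp x) * star b') g) := by rw [← hcomm]
      _ = inner ℂ g' (((ContinuousLinearMap.adjoint y).comp x) ((star b') g)) := by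
          rw [ContinuousLinearMap.mul_apply]
      _ = inner ℂ g' ((ContinuousLinearMap.adjoint y) (x ((star b') g))) := rfl
      _ = inner ℂ (y g') (x (star b' g)) := adjoint_inner_right _ _ _
  have := vec_eq_zero hE key
  rw [sub_eq_zero] at this
  exact this

/-- If `w` intertwines, then `z* ∘ w ∈ B` for `z ∈ E`. -/
lemma adjoint_comp_intertwiner_mem (hE : IsConcreteVNModule B E)
    (hρ : ∀ b' ∈ B.commutant, ∀ x ∈ E, (ρ' b').comp x = x.comp b')
    {w : G →L[ℂ] H} (hw : ∀ b' ∈ B.commutant, (ρ' b').comp w = w.comp b')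
    {z : G →L[ℂ] H} (hz : z ∈ E) :
    (ContinuousLinearMap.adjoint z).comp w ∈ B := by
  rw [← B.commutant_commutant, VonNeumannAlgebra.mem_commutant_iff]
  intro b' hb'
  have hsb' : star b' ∈ B.commutant := star_mem hb'
  have hkey : b'.comp (ContinuousLinearMap.adjoint z)
      = (ContinuousLinearMap.adjoint z).comp (ρ' b') := by
    calc b'.comp (ContinuousLinearMap.adjoint z)
        = (ContinuousLinearMap.adjoint (star b')).comp (ContinuousLinearMap.adjoint z) := by
          rw [← star_eq_adjoint, star_star]
      _ = ContinuousLinearMap.adjoint (z.comp (star b')) := by rw [adjoint_comp]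
      _ = ContinuousLinearMap.adjoint ((ρ' (star b')).comp z) := by
          rw [hρ (star b') hsb' z hz]
      _ = (ContinuousLinearMap.adjoint z).comp (ContinuousLinearMap.adjoint (ρ' (star b'))) := by
          rw [adjoint_comp]
      _ = (ContinuousLinearMap.adjoint z).comp (ρ' (star (star b'))) := by
          rw [adjoint_rho hE hρ hsb']
      _ = (ContinuousLinearMap.adjoint z).comp (ρ' b') := by rw [star_star]
  show b'.comp ((ContinuousLinearMap.adjoint z).comp w)
      = ((ContinuousLinearMap.adjoint z).comp w).comp b'
  calc b'.comp ((ContinuousLinearMap.adjoint z).comp w)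
      = (b'.comp (ContinuousLinearMap.adjoint z)).comp w := by rw [comp_assoc]
    _ = ((ContinuousLinearMap.adjoint z).comp (ρ' b')).comp w := by rw [hkey]
    _ = (ContinuousLinearMap.adjoint z).comp ((ρ' b').comp w) := by rw [comp_assoc]
    _ = (ContinuousLinearMap.adjoint z).comp (w.comp b') := by rw [hw b' hb']
    _ = ((ContinuousLinearMap.adjoint z).comp w).comp b' := by rw [comp_assoc]

/-- The key approximation lemma: an intertwiner can be approximated on finitely many vectors
simultaneously by elements of `E`. -/
lemma approx (hE : IsConcreteVNModule B E)
    (hρ : ∀ b' ∈ B.commutant, ∀ x ∈ E, (ρ' b').comp x = x.comp b')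
    {w : G →L[ℂ] H} (hw : ∀ b' ∈ B.commutant, (ρ' b').comp w = w.comp b')
    {ι : Type*} [Fintype ι] (g : ι → G) {δ : ℝ} (hδ : 0 < δ) :
    ∃ y ∈ E, ∀ i, ‖y (g i) - w (g i)‖ < δ := by
  classical
  set Hn := PiLp 2 (fun _ : ι => H) with hHn
  -- the submodule of "E-orbits" of the tuple `g`
  set V : Submodule ℂ Hn :=
    { carrier := {v : Hn | ∃ y ∈ E, ∀ i, v i = y (g i)}
      add_mem' := by
        rintro v v' ⟨y, hy, hv⟩ ⟨y', hy', hv'⟩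
        exact ⟨y + y', hE.add_mem y hy y' hy', fun i => by
          show v i + v' i = (y + y') (g i); rw [hv i, hv' i]; simp⟩
      zero_mem' := ⟨0, hE.zero_mem, fun i => rfl⟩
      smul_mem' := by
        rintro c v ⟨y, hy, hv⟩
        exact ⟨c • y, hE.smul_mem c y hy, fun i => by
          show c • v i = (c • y) (g i); rw [hv i]; simp⟩ } with hV
  haveI : CompleteSpace Hn := inferInstance
  set c : Submodule ℂ Hn := V.topologicalClosure with hc
  haveI : CompleteSpace c := V.isClosed_topologicalClosure.completeSpace_coe
  set ξ : Hn := WithLp.toLp 2 (fun i => w (g i)) with hξ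
  set η : Hn := ξ - (c.orthogonalProjectionOnto ξ : Hn) with hη
  have hηc : η ∈ cᗮ := c.sub_starProjection_mem_orthogonal ξ
  -- the diagonal operators built from `y ∘ z*`
  have main : ∀ y ∈ E, ∀ z ∈ E, ∀ i, y ((ContinuousLinearMap.adjoint z) (η i)) = 0 := by
    intro y hy z hz
    set A : H →L[ℂ] H := y.comp (ContinuousLinearMap.adjoint z) with hA
    set u : Hn →L[ℂ] Hn :=
      ((PiLp.continuousLinearEquiv 2 ℂ (fun _ : ι => H)).symm.toContinuousLinearMap).comp
        (ContinuousLinearMap.pi (fun i => A.comp (PiLp.proj (𝕜 := ℂ) 2 (fun _ : ι => H) i))) with hu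
    have hu_apply : ∀ (v : Hn) (i : ι), (u v) i = A (v i) := fun v i => rfl
    -- u maps V into V
    have huV : ∀ v ∈ V, u v ∈ V := by
      rintro v ⟨t, ht, hvt⟩
      refine ⟨y.comp ((ContinuousLinearMap.adjoint z).comp t),
        hE.comp_mem y hy _ (hE.adjoint_comp_mem z hz t ht), fun i => ?_⟩
      rw [hu_apply, hvt i]; rfl
    -- u maps c into c
    have hcoe : (c : Set Hn) = closure (V : Set Hn) := V.topologicalClosure_coe
    have huc : ∀ v ∈ c, u v ∈ c := by
      intro v hv
      have hv' : v ∈ closure (V : Set Hn) := by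
        rw [← hcoe]; exact hv
      have h2 : u v ∈ closure (u '' (V : Set Hn)) :=
        map_mem_closure u.continuous hv' (Set.mapsTo_image _ _)
      have h3 : closure (u '' (V : Set Hn)) ⊆ closure (V : Set Hn) := by
        apply closure_mono
        rintro _ ⟨a, ha, rfl⟩
        exact huV a ha
      rw [← SetLike.mem_coe, hcoe]
      exact h3 h2
    -- u ξ ∈ V
    have huξ : u ξ ∈ V := by
      refine ⟨y.comp ((ContinuousLinearMap.adjoint z).comp w),
        hE.comp_mem y hy _ (adjoint_comp_intertwiner_mem hE hρ hw hz), fun i => ?_⟩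
      rw [hu_apply]; rfl
    -- u η ∈ c
    have huηc : u η ∈ c := by
      have : u η = u ξ - u ((c.orthogonalProjectionOnto ξ : Hn)) := by rw [hη, map_sub]
      rw [this]
      exact c.sub_mem (V.le_topologicalClosure huξ)
        (huc _ ((c.orthogonalProjectionOnto ξ).2))
    -- u η ⟂ V
    have huηV : ∀ v ∈ V, (inner ℂ v (u η) : ℂ) = 0 := by
      rintro v ⟨t, ht, hvt⟩
      set v' : Hn := WithLp.toLp 2 (fun i => (z.comp ((ContinuousLinearMap.adjoint y).comp t)) (g i))
        with hv'def
      have : (inner ℂ v (u η) : ℂ) = inner ℂ v' η := by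
        rw [PiLp.inner_apply, PiLp.inner_apply]
        refine Finset.sum_congr rfl fun i _ => ?_
        rw [hu_apply, hvt i]
        show (inner ℂ (t (g i)) (A (η i)) : ℂ) = _
        rw [hA]
        calc (inner ℂ (t (g i)) ((y.comp (ContinuousLinearMap.adjoint z)) (η i)) : ℂ)
            = inner ℂ (t (g i)) (y ((ContinuousLinearMap.adjoint z) (η i))) := rfl
          _ = inner ℂ ((ContinuousLinearMap.adjoint y) (t (g i)))
              ((ContinuousLinearMap.adjoint z) (η i)) := by rw [← adjoint_inner_left]
          _ = inner ℂ (z ((ContinuousLinearMap.adjoint y) (t (g i)))) (η i) := by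
              rw [adjoint_inner_right]
          _ = inner ℂ (v' i) (η i) := rfl
      rw [this]
      have hv'mem : v' ∈ V :=
        ⟨z.comp ((ContinuousLinearMap.adjoint y).comp t),
          hE.comp_mem z hz _ (hE.adjoint_comp_mem y hy t ht), fun i => rfl⟩
      exact (Submodule.mem_orthogonal c η).mp hηc _ (V.le_topologicalClosure hv'mem)
    -- hence u η = 0
    have huη0 : u η = 0 := by
      have hcl : (u η : Hn) ∈ closure (V : Set Hn) := by
        rw [← hcoe]; exact huηc
      have hclosed : IsClosed {v : Hn | (inner ℂ v (u η) : ℂ) = 0} :=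
        isClosed_eq (continuous_id.inner continuous_const) continuous_const
      have hsub : (V : Set Hn) ⊆ {v : Hn | (inner ℂ v (u η) : ℂ) = 0} := fun v hv => huηV v hv
      have : (inner ℂ (u η) (u η) : ℂ) = 0 := (closure_minimal hsub hclosed) hcl
      exact inner_self_eq_zero.mp this
    intro i
    have := congrArg (fun v : Hn => v i) huη0
    simpa [hu_apply, hA] using this
  -- hence η = 0
  have hη0 : η = 0 := by
    ext i
    have hz0 : ∀ z ∈ E, (ContinuousLinearMap.adjoint z) (η i) = 0 := by
      intro z hz
      have h1 := main z hz z hz i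
      have : (inner ℂ ((ContinuousLinearMap.adjoint z) (η i))
          ((ContinuousLinearMap.adjoint z) (η i)) : ℂ) = 0 := by
        rw [adjoint_inner_right, h1, inner_zero_left]
      exact inner_self_eq_zero.mp this
    have : ∀ x ∈ E, ∀ gg : G, (inner ℂ (x gg) (η i) : ℂ) = 0 := by
      intro x hx gg
      rw [← adjoint_inner_right, hz0 x hx, inner_zero_right]
    exact vec_eq_zero hE this
  have hξc : ξ ∈ closure (V : Set Hn) := by
    have hx : ξ = (c.orthogonalProjectionOnto ξ : Hn) := by
      have := hη0; rw [hη, sub_eq_zero] at this; exact this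
    rw [← V.topologicalClosure_coe, hx]
    exact (c.orthogonalProjectionOnto ξ).2
  -- extract the approximation
  rw [Metric.mem_closure_iff] at hξc
  obtain ⟨v, hvV, hvd⟩ := hξc δ hδ
  obtain ⟨y, hy, hvy⟩ := hvV
  refine ⟨y, hy, fun i => ?_⟩
  have hcoord : ‖(ξ - v : Hn) i‖ ≤ ‖(ξ - v : Hn)‖ := by
    rw [PiLp.norm_eq_of_L2]
    have h1 : ‖(ξ - v : Hn) i‖ = Real.sqrt (‖(ξ - v : Hn) i‖ ^ 2) := by
      rw [Real.sqrt_sq (norm_nonneg _)]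
    rw [h1]
    apply Real.sqrt_le_sqrt
    exact Finset.single_le_sum (fun j _ => sq_nonneg ‖(ξ - v : Hn) j‖) (Finset.mem_univ i)
  have : ‖y (g i) - w (g i)‖ = ‖(ξ - v : Hn) i‖ := by
    show _ = ‖ξ i - v i‖
    rw [hvy i, norm_sub_rev]
  rw [this]
  calc ‖(ξ - v : Hn) i‖ ≤ ‖(ξ - v : Hn)‖ := hcoord
    _ = dist ξ v := (dist_eq_norm _ _).symm
    _ < δ := hvd

/-- Any intertwiner lies in `E`. -/
lemma intertwiner_mem (hE : IsConcreteVNModule B E)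
    (hρ : ∀ b' ∈ B.commutant, ∀ x ∈ E, (ρ' b').comp x = x.comp b')
    {w : G →L[ℂ] H} (hw : ∀ b' ∈ B.commutant, (ρ' b').comp w = w.comp b') : w ∈ E := by
  classical
  suffices hmem : w ∈ @closure _ (wot G H) E by
    exact Set.mem_of_mem_of_subset hmem (@IsClosed.closure_subset _ (wot G H) E hE.isClosed)
  rw [@mem_closure_iff_nhds _ (wot G H) w E]
  intro s hs
  have hnhds : @nhds _ (wot G H) w = ⨅ p : G × H,
      Filter.comap (fun T : G →L[ℂ] H => (inner ℂ p.2 (T p.1) : ℂ))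
        (nhds (inner ℂ p.2 (w p.1) : ℂ)) := by
    rw [wot, nhds_iInf]
    exact iInf_congr fun p => nhds_induced _ _
  rw [hnhds, Filter.mem_iInf] at hs
  obtain ⟨I, hIfin, Vs, hVs, rfl⟩ := hs
  haveI : Finite I := hIfin.to_subtype
  have hball : ∀ i : I, ∃ ε > (0:ℝ), ∀ T : G →L[ℂ] H,
      dist (inner ℂ (i : G × H).2 (T (i : G × H).1) : ℂ)
        (inner ℂ (i : G × H).2 (w (i : G × H).1) : ℂ) < ε → T ∈ Vs i := by
    intro i
    obtain ⟨t, ht, hsub⟩ := Filter.mem_comap.mp (hVs i)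
    obtain ⟨ε, hε, hballsub⟩ := Metric.mem_nhds_iff.mp ht
    exact ⟨ε, hε, fun T hT => hsub (hballsub hT)⟩
  choose ε hε hεsub using hball
  rcases isEmpty_or_nonempty I with hI | hI
  · exact ⟨0, by simp, hE.zero_mem⟩
  haveI : Fintype I := Fintype.ofFinite I
  have huniv : (Finset.univ : Finset I).Nonempty := Finset.univ_nonempty
  set ε₀ : ℝ := Finset.univ.inf' huniv ε with hε₀def
  have hε₀ : 0 < ε₀ := by
    rw [hε₀def, Finset.lt_inf'_iff]
    exact fun i _ => hε i
  set C : ℝ := Finset.univ.sup' huniv (fun i : I => ‖(i : G × H).2‖) with hCdef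
  have hC : ∀ i : I, ‖(i : G × H).2‖ ≤ C := fun i =>
    Finset.le_sup' (fun i : I => ‖(i : G × H).2‖) (Finset.mem_univ i)
  have hC0 : 0 ≤ C := le_trans (norm_nonneg _) (hC hI.some)
  have hC1 : (0:ℝ) < C + 1 := by linarith
  set δ : ℝ := ε₀ / (C + 1) with hδdef
  have hδ : 0 < δ := div_pos hε₀ hC1
  obtain ⟨y, hy, hyapprox⟩ := approx hE hρ hw (fun i : I => (i : G × H).1) hδ
  refine ⟨y, ?_, hy⟩
  rw [Set.mem_iInter]
  intro i
  apply hεsub i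
  have h1 : (inner ℂ (i : G × H).2 (y (i : G × H).1) : ℂ)
      - (inner ℂ (i : G × H).2 (w (i : G × H).1) : ℂ)
      = inner ℂ (i : G × H).2 (y (i : G × H).1 - w (i : G × H).1) := by
    rw [inner_sub_right]
  rw [dist_eq_norm, h1]
  calc ‖(inner ℂ (i : G × H).2 (y (i : G × H).1 - w (i : G × H).1) : ℂ)‖
      ≤ ‖(i : G × H).2‖ * ‖y (i : G × H).1 - w (i : G × H).1‖ := norm_inner_le_norm _ _
    _ ≤ C * ‖y (i : G × H).1 - w (i : G × H).1‖ :=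
        mul_le_mul_of_nonneg_right (hC i) (norm_nonneg _)
    _ ≤ (C + 1) * ‖y (i : G × H).1 - w (i : G × H).1‖ := by
        apply mul_le_mul_of_nonneg_right (by linarith) (norm_nonneg _)
    _ < (C + 1) * δ := by
        exact mul_lt_mul_of_pos_left (hyapprox i) hC1
    _ = ε₀ := by rw [hδdef]; field_simp
    _ ≤ ε i := Finset.inf'_le ε (Finset.mem_univ i)

end Stmt4Aux

/-- the algebra of adjointable operators of `E`, realized in `B(H)`, equals the
commutant of `ρ'(B')` in `B(H)`. -/
theorem stmt4 (B : VonNeumannAlgebra G) (E : Set (G →L[ℂ] H))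
    (hE : IsConcreteVNModule B E)
    (ρ' : (G →L[ℂ] G) → (H →L[ℂ] H))
    (hρ : ∀ b' ∈ B.commutant, ∀ x ∈ E, (ρ' b').comp x = x.comp b') :
    {a : H →L[ℂ] H | ∀ x ∈ E, a.comp x ∈ E ∧ (ContinuousLinearMap.adjoint a).comp x ∈ E}
      = {a : H →L[ℂ] H | ∀ b' ∈ B.commutant, a * ρ' b' = ρ' b' * a} := by
  open ContinuousLinearMap in
  ext a
  simp only [Set.mem_setOf_eq]
  constructor
  · intro ha b' hb'
    refine Stmt4Aux.clm_ext hE fun x hx g => ?_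
    have h1 : (ρ' b') (x g) = x (b' g) := by
      have := congrArg (fun T : G →L[ℂ] H => T g) (hρ b' hb' x hx)
      simpa using this
    have h2 : (ρ' b') ((a.comp x) g) = (a.comp x) (b' g) := by
      have := congrArg (fun T : G →L[ℂ] H => T g) (hρ b' hb' _ (ha x hx).1)
      simpa using this
    calc (a * ρ' b') (x g) = a ((ρ' b') (x g)) := ContinuousLinearMap.mul_apply _ _ _
      _ = a (x (b' g)) := by rw [h1]
      _ = (a.comp x) (b' g) := rfl
      _ = (ρ' b') ((a.comp x) g) := h2.symm
      _ = (ρ' b' * a) (x g) := (ContinuousLinearMap.mul_apply _ _ _).symm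
  · intro ha x hx
    have hint : ∀ (d : H →L[ℂ] H), (∀ b' ∈ B.commutant, d * ρ' b' = ρ' b' * d) →
        ∀ b' ∈ B.commutant, (ρ' b').comp (d.comp x) = (d.comp x).comp b' := by
      intro d hd b' hb'
      ext g
      have h1 : (ρ' b') (x g) = x (b' g) := by
        have := congrArg (fun T : G →L[ℂ] H => T g) (hρ b' hb' x hx)
        simpa using this
      calc ((ρ' b').comp (d.comp x)) g = (ρ' b' * d) (x g) :=
          rfl
        _ = (d * ρ' b') (x g) := by rw [hd b' hb']
        _ = d ((ρ' b') (x g)) := ContinuousLinearMap.mul_apply _ _ _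
        _ = d (x (b' g)) := by rw [h1]
        _ = ((d.comp x).comp b') g := rfl
    have hadj_comm : ∀ b' ∈ B.commutant,
        (ContinuousLinearMap.adjoint a) * ρ' b' = ρ' b' * (ContinuousLinearMap.adjoint a) := by
      intro b' hb'
      have hsb' : star b' ∈ B.commutant := star_mem hb'
      have h := ha (star b') hsb'
      have hstar := congrArg star h
      rw [star_mul, star_mul] at hstar
      have hrs : star (ρ' (star b')) = ρ' b' := by
        rw [ContinuousLinearMap.star_eq_adjoint, Stmt4Aux.adjoint_rho hE hρ hsb', star_star]
      rw [hrs] at hstar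
      rw [← ContinuousLinearMap.star_eq_adjoint]
      exact hstar.symm
    exact ⟨Stmt4Aux.intertwiner_mem hE hρ (hint a ha),
      Stmt4Aux.intertwiner_mem hE hρ (hint _ hadj_comm)⟩
end
end

section
/- Let B be a von Neumann algebra on a complex Hilbert space G, and let E ⊆ B(G,H) be a complex linear subspace such that x∘b ∈ E for all x ∈ E, b ∈ B, x*∘y ∈ B for all x, y ∈ E, and span{x g : x ∈ E, g ∈ G} is dense in H (E is not assumed WOT-closed). Let ρ' : B' → B(H) be the commutant lifting of E. Then the closure of E in the weak operator topology of B(G,H) equals {y ∈ B(G,H) : ρ'(b') ∘ y = y ∘ b' for all b' ∈ B'}. -/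
noncomputable section

variable {G H K : Type*}
  [NormedAddCommGroup G] [InnerProductSpace ℂ G] [CompleteSpace G]
  [NormedAddCommGroup H] [InnerProductSpace ℂ H] [CompleteSpace H]
  [NormedAddCommGroup K] [InnerProductSpace ℂ K] [CompleteSpace K]

set_option linter.unusedSectionVars false
set_option maxHeartbeats 1000000
set_option synthInstance.maxHeartbeats 1000000
open scoped InnerProductSpace Topology NNReal

section Helpers

variable {ι : Type*} [Fintype ι] [DecidableEq ι]


instance piLp_completeSpace {ι : Type*} [Fintype ι] {β : ι → Type*}
    [∀ i, NormedAddCommGroup (β i)] [∀ i, CompleteSpace (β i)] :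
    CompleteSpace (PiLp 2 β) := by
  exact inferInstance

lemma piLp_ext {β : ι → Type*} [∀ i, NormedAddCommGroup (β i)] {v w : PiLp 2 β}
    (h : ∀ i, v i = w i) : v = w := (WithLp.ext_iff 2).2 (funext h)

lemma piLp_coord_norm_le {β : ι → Type*} [∀ i, NormedAddCommGroup (β i)]
    (v : PiLp 2 β) (i : ι) : ‖v i‖ ≤ ‖v‖ := by
  rw [PiLp.norm_eq_of_L2]
  rw [show ‖v i‖ = Real.sqrt (‖v i‖^2) by simp [Real.sqrt_sq (norm_nonneg _)]]
  apply Real.sqrt_le_sqrt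
  exact Finset.single_le_sum (f := fun j => ‖v j‖^2) (fun j _ => sq_nonneg _) (Finset.mem_univ i)

def amap (T : G →L[ℂ] H) (ι : Type*) [Fintype ι] :
    PiLp 2 (fun _ : ι => G) →L[ℂ] PiLp 2 (fun _ : ι => H) :=
  ((PiLp.continuousLinearEquiv 2 ℂ (fun _ : ι => H)).symm :
      (∀ _ : ι, H) →L[ℂ] PiLp 2 (fun _ : ι => H)).comp
    (ContinuousLinearMap.pi (fun i => T.comp (PiLp.proj 2 (fun _ : ι => G) i)))

@[simp] lemma amap_apply (T : G →L[ℂ] H) (v : PiLp 2 (fun _ : ι => G)) (i : ι) :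
    amap T ι v i = T (v i) := by
  simp [amap, ContinuousLinearMap.pi]

def inclP (ι : Type*) [Fintype ι] [DecidableEq ι] (j : ι) : G →L[ℂ] PiLp 2 (fun _ : ι => G) :=
  ((PiLp.continuousLinearEquiv 2 ℂ (fun _ : ι => G)).symm :
      (∀ _ : ι, G) →L[ℂ] PiLp 2 (fun _ : ι => G)).comp
    (ContinuousLinearMap.pi (fun k => if k = j then ContinuousLinearMap.id ℂ G else 0))

@[simp] lemma inclP_apply (j : ι) (x : G) (k : ι) :
    inclP ι j x k = if k = j then x else 0 := by
  simp [inclP, ContinuousLinearMap.pi]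
  split <;> rfl

lemma eq_sum_inclP (v : PiLp 2 (fun _ : ι => G)) : v = ∑ j, inclP ι j (v j) := by
  apply (PiLp.continuousLinearEquiv 2 ℂ (fun _ : ι => G)).injective
  funext k
  simp [map_sum]

lemma piLp_sum_apply {β : ι → Type*} [∀ i, NormedAddCommGroup (β i)] {α : Type*}
    (s : Finset α) (w : α → PiLp 2 β) (k : ι) :
    (∑ a ∈ s, w a) k = ∑ a ∈ s, w a k := by
  classical
  induction s using Finset.induction with
  | empty => rfl
  | insert a s h ih => rw [Finset.sum_insert h, Finset.sum_insert h, ← ih]; rfl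

def matP (m : ι → ι → (H →L[ℂ] H)) :
    PiLp 2 (fun _ : ι => H) →L[ℂ] PiLp 2 (fun _ : ι => H) :=
  ((PiLp.continuousLinearEquiv 2 ℂ (fun _ : ι => H)).symm :
      (∀ _ : ι, H) →L[ℂ] PiLp 2 (fun _ : ι => H)).comp
    (ContinuousLinearMap.pi (fun i => ∑ j, (m i j).comp (PiLp.proj 2 (fun _ : ι => H) j)))

@[simp] lemma matP_apply (m : ι → ι → (H →L[ℂ] H)) (v : PiLp 2 (fun _ : ι => H)) (i : ι) :
    matP m v i = ∑ j, m i j (v j) := by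
  simp [matP, ContinuousLinearMap.pi]

def entryP (P : PiLp 2 (fun _ : ι => G) →L[ℂ] PiLp 2 (fun _ : ι => G)) (i j : ι) :
    G →L[ℂ] G :=
  (PiLp.proj 2 (fun _ : ι => G) i).comp (P.comp (inclP ι j))

lemma entryP_apply (P : PiLp 2 (fun _ : ι => G) →L[ℂ] PiLp 2 (fun _ : ι => G)) (i j : ι)
    (x : G) : entryP P i j x = (P (inclP ι j x)) i := rfl

lemma apply_eq_sum_entryP (P : PiLp 2 (fun _ : ι => G) →L[ℂ] PiLp 2 (fun _ : ι => G))
    (v : PiLp 2 (fun _ : ι => G)) (i : ι) : (P v) i = ∑ j, entryP P i j (v j) := by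
  conv_lhs => rw [eq_sum_inclP v, map_sum]
  rw [piLp_sum_apply]
  rfl

lemma proj_comm {F : Type*} [NormedAddCommGroup F] [InnerProductSpace ℂ F]
    (K : Submodule ℂ F) [K.HasOrthogonalProjection] (A Ad : F →L[ℂ] F)
    (hAdj : ∀ v w, ⟪A v, w⟫_ℂ = ⟪v, Ad w⟫_ℂ)
    (hA : ∀ v ∈ K, A v ∈ K) (hAd : ∀ v ∈ K, Ad v ∈ K) (v : F) :
    (K.orthogonalProjectionOnto (A v) : F) = A (K.orthogonalProjectionOnto v : F) := by
  have hdec : A v = A (K.orthogonalProjectionOnto v : F) + A (v - (K.orthogonalProjectionOnto v : F)) := by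
    rw [← map_add]; congr 1; abel
  have h1 : A (K.orthogonalProjectionOnto v : F) ∈ K := hA _ (K.orthogonalProjectionOnto v).2
  have key : ∀ z u : F, ⟪u, A z⟫_ℂ = ⟪Ad u, z⟫_ℂ := by
    intro z u
    rw [← inner_conj_symm, hAdj, inner_conj_symm]
  have h2 : A (v - (K.orthogonalProjectionOnto v : F)) ∈ Kᗮ := by
    refine (Submodule.mem_orthogonal K _).2 fun u hu => ?_
    rw [key]
    exact (Submodule.mem_orthogonal K _).1
      (Submodule.sub_starProjection_mem_orthogonal v) _ (hAd _ hu)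
  rw [hdec, map_add, Submodule.orthogonalProjectionOnto_apply_of_mem_orthogonal h2,
    add_zero]
  exact Submodule.starProjection_eq_self_iff.2 h1

lemma key_approx (B : VonNeumannAlgebra G) (E : Submodule ℂ (G →L[ℂ] H))
    (hcomp : ∀ x ∈ E, ∀ b ∈ B, ContinuousLinearMap.comp x b ∈ E)
    (hdense : Dense ((Submodule.span ℂ {h : H | ∃ x ∈ E, ∃ g : G, x g = h} :
        Submodule ℂ H) : Set H))
    (ρ' : (G →L[ℂ] G) → (H →L[ℂ] H))
    (hρ : ∀ b' ∈ B.commutant, ∀ x ∈ E, (ρ' b').comp x = x.comp b')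
    (y : G →L[ℂ] H) (hy : ∀ b' ∈ B.commutant, (ρ' b').comp y = y.comp b')
    (ι : Type*) [Fintype ι] [DecidableEq ι] (g : ι → G) (ε : ℝ) (hε : 0 < ε) :
    ∃ x ∈ E, ∀ i, ‖y (g i) - x (g i)‖ < ε := by
  classical
  -- the amplified vector and module
  set φ : (G →L[ℂ] G) → PiLp 2 (fun _ : ι => G) :=
    fun b => (WithLp.equiv 2 (∀ _ : ι, G)).symm (fun i => b (g i)) with hφdef
  have hφ : ∀ b i, φ b i = b (g i) := fun _ _ => rfl
  set S0 : Set (PiLp 2 (fun _ : ι => G)) := {v | ∃ b ∈ B, v = φ b} with hS0def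
  set Kc : Submodule ℂ (PiLp 2 (fun _ : ι => G)) :=
    (Submodule.span ℂ S0).topologicalClosure with hKcdef
  have hKclosed : IsClosed (Kc : Set (PiLp 2 (fun _ : ι => G))) :=
    Submodule.isClosed_topologicalClosure _
  haveI : CompleteSpace Kc := hKclosed.completeSpace_coe
  set P : PiLp 2 (fun _ : ι => G) →L[ℂ] PiLp 2 (fun _ : ι => G) :=
    Kc.subtypeL.comp (Kc.orthogonalProjectionOnto) with hPdef
  have hPapp : ∀ v, P v = (Kc.orthogonalProjectionOnto v : PiLp 2 (fun _ : ι => G)) :=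
    fun _ => rfl
  -- invariance of Kc under amplified B
  have hamapφ : ∀ (b b₁ : G →L[ℂ] G), amap b ι (φ b₁) = φ (b * b₁) := by
    intro b b₁
    refine piLp_ext fun i => ?_
    rw [amap_apply, hφ, hφ]
    rfl
  have hinv_span : ∀ b ∈ B, ∀ v ∈ Submodule.span ℂ S0,
      amap b ι v ∈ Submodule.span ℂ S0 := by
    intro b hb v hv
    induction hv using Submodule.span_induction with
    | mem v hv =>
        obtain ⟨b₁, hb₁, rfl⟩ := hv
        exact Submodule.subset_span ⟨b * b₁, mul_mem hb hb₁, (hamapφ b b₁).symm ▸ rfl⟩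
    | zero => rw [map_zero]; exact zero_mem _
    | add u w _ _ hu hw => rw [map_add]; exact add_mem hu hw
    | smul c u _ hu => rw [map_smul]; exact Submodule.smul_mem _ _ hu
  have hinv : ∀ b ∈ B, ∀ v ∈ Kc, amap b ι v ∈ Kc := by
    intro b hb v hv
    have : amap b ι v ∈ closure ((Submodule.span ℂ S0 : Submodule ℂ _) :
        Set (PiLp 2 (fun _ : ι => G))) :=
      map_mem_closure (amap b ι).continuous hv (fun w hw => hinv_span b hb w hw)
    exact this
  have hAdj : ∀ (b : G →L[ℂ] G) v w,
      ⟪amap b ι v, w⟫_ℂ = ⟪v, amap (star b) ι w⟫_ℂ := by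
    intro b v w
    rw [PiLp.inner_apply, PiLp.inner_apply]
    refine Finset.sum_congr rfl fun i _ => ?_
    rw [amap_apply, amap_apply, ContinuousLinearMap.star_eq_adjoint,
      ContinuousLinearMap.adjoint_inner_right]
  have hPcomm : ∀ b ∈ B, ∀ v, P (amap b ι v) = amap b ι (P v) := by
    intro b hb v
    rw [hPapp, hPapp]
    exact proj_comm Kc (amap b ι) (amap (star b) ι) (hAdj b)
      (fun v hv => hinv b hb v hv) (fun v hv => hinv (star b) (star_mem hb) v hv) v
  -- the entries of P lie in the commutant
  set p : ι → ι → (G →L[ℂ] G) := fun i j => entryP P i j with hpdef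
  have hp : ∀ i j, p i j ∈ B.commutant := by
    intro i j
    rw [VonNeumannAlgebra.mem_commutant_iff]
    intro b hb
    ext g₀
    have h1 : inclP ι j (b g₀) = amap b ι (inclP ι j g₀) := by
      refine piLp_ext fun k => ?_
      rw [amap_apply, inclP_apply, inclP_apply, apply_ite b, map_zero]
    show b (p i j g₀) = p i j (b g₀)
    rw [hpdef]
    simp only [entryP_apply]
    rw [h1, hPcomm b hb, amap_apply]
  -- the lifted projection
  set Q : PiLp 2 (fun _ : ι => H) →L[ℂ] PiLp 2 (fun _ : ι => H) :=
    matP (fun i j => ρ' (p i j)) with hQdef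
  have hrel : ∀ (z : G →L[ℂ] H), (∀ i j, (ρ' (p i j)).comp z = z.comp (p i j)) →
      ∀ v, Q (amap z ι v) = amap z ι (P v) := by
    intro z hz v
    refine piLp_ext fun i => ?_
    rw [hQdef, matP_apply, amap_apply, apply_eq_sum_entryP P v i, map_sum]
    refine Finset.sum_congr rfl fun j _ => ?_
    have := congrArg (fun T : G →L[ℂ] H => T (v j)) (hz i j)
    simpa using this
  -- the subspaces D (target) and T (dense domain)
  set Ψ : (G →L[ℂ] H) →ₗ[ℂ] PiLp 2 (fun _ : ι => H) :=
    { toFun := fun x => (WithLp.equiv 2 (∀ _ : ι, H)).symm (fun i => x (g i))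
      map_add' := fun x₁ x₂ => piLp_ext fun i => rfl
      map_smul' := fun c x => piLp_ext fun i => rfl } with hΨdef
  have hΨ : ∀ x i, Ψ x i = x (g i) := fun _ _ => rfl
  set D : Submodule ℂ (PiLp 2 (fun _ : ι => H)) := Submodule.map Ψ E with hDdef
  set Dc := D.topologicalClosure with hDcdef
  have hamapΨ : ∀ (x : G →L[ℂ] H) (b : G →L[ℂ] G), amap x ι (φ b) = Ψ (x.comp b) := by
    intro x b
    exact piLp_ext fun i => rfl
  have step1 : ∀ x ∈ E, ∀ v ∈ Kc, amap x ι v ∈ Dc := by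
    intro x hx v hv
    have hmaps : ∀ w ∈ Submodule.span ℂ S0, amap x ι w ∈ D := by
      intro w hw
      induction hw using Submodule.span_induction with
      | mem w hw =>
          obtain ⟨b, hb, rfl⟩ := hw
          rw [hamapΨ]
          exact ⟨x.comp b, hcomp x hx b hb, rfl⟩
      | zero => rw [map_zero]; exact zero_mem _
      | add u w _ _ hu hw => rw [map_add]; exact add_mem hu hw
      | smul c u _ hu => rw [map_smul]; exact Submodule.smul_mem _ _ hu
    have : amap x ι v ∈ closure (D : Set (PiLp 2 (fun _ : ι => H))) :=
      map_mem_closure (amap x ι).continuous hv hmaps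
    exact this
  -- density of the span of amplified vectors
  set Tgen : Set (PiLp 2 (fun _ : ι => H)) :=
    {w | ∃ x ∈ E, ∃ v : PiLp 2 (fun _ : ι => G), w = amap x ι v} with hTgendef
  set T : Submodule ℂ (PiLp 2 (fun _ : ι => H)) := Submodule.span ℂ Tgen with hTdef
  have hTdense : Dense (T : Set (PiLp 2 (fun _ : ι => H))) := by
    rw [Submodule.dense_iff_topologicalClosure_eq_top,
      Submodule.topologicalClosure_eq_top_iff, Submodule.eq_bot_iff]
    · intro u hu
      have hu' : ∀ w ∈ T, ⟪w, u⟫_ℂ = 0 := (Submodule.mem_orthogonal T u).1 hu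
      refine piLp_ext fun j => ?_
      have huj : u j ∈ (Submodule.span ℂ {h : H | ∃ x ∈ E, ∃ g : G, x g = h})ᗮ := by
        refine (Submodule.mem_orthogonal _ _).2 fun h' hh' => ?_
        induction hh' using Submodule.span_induction with
        | mem h' hh' =>
            obtain ⟨x, hx, g₀, rfl⟩ := hh'
            have hw : amap x ι (inclP ι j g₀) ∈ T :=
              Submodule.subset_span ⟨x, hx, inclP ι j g₀, rfl⟩
            have h0 := hu' _ hw
            rw [PiLp.inner_apply] at h0
            have hcoord : ∀ i, (⟪amap x ι (inclP ι j g₀) i, u i⟫_ℂ)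
                = if i = j then ⟪x g₀, u j⟫_ℂ else 0 := by
              intro i
              rw [amap_apply, inclP_apply, apply_ite x, map_zero]
              split
              · subst ‹i = j›; rfl
              · rw [inner_zero_left]
            rw [Finset.sum_congr rfl (fun i _ => hcoord i), Finset.sum_ite_eq' Finset.univ j]
              at h0
            simpa using h0
        | zero => rw [inner_zero_left]
        | add h₁ h₂ _ _ ih₁ ih₂ => rw [inner_add_left, ih₁, ih₂, add_zero]
        | smul c h₁ _ ih => rw [inner_smul_left, ih, mul_zero]
      have hbot : (Submodule.span ℂ {h : H | ∃ x ∈ E, ∃ g : G, x g = h})ᗮ = ⊥ := by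
        rw [← Submodule.topologicalClosure_eq_top_iff,
          ← Submodule.dense_iff_topologicalClosure_eq_top]
        exact hdense
      rw [hbot, Submodule.mem_bot] at huj
      exact huj
  -- Q maps everything into Dc
  have step3 : ∀ w ∈ T, Q w ∈ Dc := by
    intro w hw
    induction hw using Submodule.span_induction with
    | mem w hw =>
        obtain ⟨x, hx, v, rfl⟩ := hw
        rw [hrel x (fun i j => hρ (p i j) (hp i j) x hx) v]
        exact step1 x hx _ (hPapp v ▸ (Kc.orthogonalProjectionOnto v).2)
    | zero => rw [map_zero]; exact zero_mem _
    | add u w _ _ hu hw => rw [map_add]; exact add_mem hu hw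
    | smul c u _ hu => rw [map_smul]; exact Submodule.smul_mem _ _ hu
  have hQD : ∀ w, Q w ∈ Dc := by
    intro w
    have hwcl : w ∈ closure (T : Set (PiLp 2 (fun _ : ι => H))) := hTdense w
    have : Q w ∈ closure (Dc : Set (PiLp 2 (fun _ : ι => H))) :=
      map_mem_closure Q.continuous hwcl step3
    rwa [(Submodule.isClosed_topologicalClosure D).closure_eq] at this
  -- conclusion
  set gh : PiLp 2 (fun _ : ι => G) := φ 1 with hghdef
  have hgh : gh ∈ Kc :=
    Submodule.le_topologicalClosure _ (Submodule.subset_span ⟨1, one_mem B, rfl⟩)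
  have hPgh : P gh = gh := by
    rw [hPapp]
    exact Submodule.starProjection_eq_self_iff.2 hgh
  have hyfix : Q (amap y ι gh) = amap y ι gh := by
    rw [hrel y (fun i j => hy (p i j) (hp i j)) gh, hPgh]
  have hmem : amap y ι gh ∈ closure (D : Set (PiLp 2 (fun _ : ι => H))) := by
    rw [← hyfix]
    exact hQD _
  rw [Metric.mem_closure_iff] at hmem
  obtain ⟨d, hd, hdist⟩ := hmem ε hε
  obtain ⟨x, hx, rfl⟩ := hd
  refine ⟨x, hx, fun i => ?_⟩
  have h1 : ‖y (g i) - x (g i)‖ = ‖(amap y ι gh - Ψ x) i‖ := rfl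
  calc ‖y (g i) - x (g i)‖ = ‖(amap y ι gh - Ψ x) i‖ := h1
    _ ≤ ‖amap y ι gh - Ψ x‖ := piLp_coord_norm_le _ i
    _ < ε := by rwa [← dist_eq_norm]

lemma wot_cont (g : G) (h : H) :
    @Continuous _ _ (wot G H) _ (fun T : G →L[ℂ] H => (inner ℂ h (T g) : ℂ)) :=
  continuous_iInf_dom (i := (g, h)) continuous_induced_dom

lemma mem_closure_wot {S : Set (G →L[ℂ] H)} {y : G →L[ℂ] H}
    (h : ∀ (s : Finset (G × H)), ∀ ε > 0, ∃ x ∈ S, ∀ p ∈ s,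
      ‖(inner ℂ p.2 ((x - y) p.1) : ℂ)‖ < ε) :
    y ∈ @closure _ (wot G H) S := by
  classical
  letI : TopologicalSpace (G →L[ℂ] H) := wot G H
  rw [mem_closure_iff_nhds]
  intro t ht
  have ht' : t ∈ ⨅ p : G × H, Filter.comap
      (fun T : G →L[ℂ] H => (inner ℂ p.2 (T p.1) : ℂ)) (𝓝 (inner ℂ p.2 (y p.1) : ℂ)) := by
    have h1 : (𝓝 y : Filter (G →L[ℂ] H)) = ⨅ p : G × H,
        @nhds _ (TopologicalSpace.induced
          (fun T : G →L[ℂ] H => (inner ℂ p.2 (T p.1) : ℂ)) inferInstance) y := nhds_iInf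
    rw [h1] at ht
    simpa only [nhds_induced] using ht
  rw [Filter.mem_iInf] at ht'
  obtain ⟨I, Ifin, V, hV, rfl⟩ := ht'
  choose W hW hsub using fun i : I => Filter.mem_comap.1 (hV i)
  choose δ hδ hball using fun i : I => Metric.mem_nhds_iff.1 (hW i)
  haveI := Ifin.fintype
  by_cases hne : Nonempty I
  · have hfne : (Finset.univ : Finset I).Nonempty := Finset.univ_nonempty
    set εm := Finset.inf' Finset.univ hfne δ with hεm
    have hεm0 : 0 < εm := (Finset.lt_inf'_iff hfne).2 fun i _ => hδ i
    obtain ⟨x, hxS, hx⟩ := h Ifin.toFinset εm hεm0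
    refine ⟨x, Set.mem_iInter.2 fun i => hsub i ?_, hxS⟩
    apply hball i
    have : (inner ℂ (i : G × H).2 (x (i : G × H).1) : ℂ) - inner ℂ (i : G × H).2 (y (i : G × H).1)
        = inner ℂ (i : G × H).2 ((x - y) (i : G × H).1) := by
      rw [ContinuousLinearMap.sub_apply, inner_sub_right]
    rw [Metric.mem_ball, dist_eq_norm, this]
    exact lt_of_lt_of_le (hx _ (Ifin.mem_toFinset.2 i.2)) (Finset.inf'_le _ (Finset.mem_univ i))
  · obtain ⟨x, hxS, _⟩ := h ∅ 1 one_pos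
    exact ⟨x, Set.mem_iInter.2 fun i => (hne ⟨i⟩).elim, hxS⟩

lemma intertwiner_isClosed (S : Set (G →L[ℂ] G)) (ρ' : (G →L[ℂ] G) → (H →L[ℂ] H)) :
    @IsClosed _ (wot G H) {y : G →L[ℂ] H | ∀ b' ∈ S, (ρ' b').comp y = y.comp b'} := by
  letI : TopologicalSpace (G →L[ℂ] H) := wot G H
  have hset : {y : G →L[ℂ] H | ∀ b' ∈ S, (ρ' b').comp y = y.comp b'}
      = ⋂ b' ∈ S, ⋂ q : G × H, {y : G →L[ℂ] H |
        (inner ℂ q.2 ((ρ' b') (y q.1)) : ℂ) = inner ℂ q.2 (y (b' q.1))} := by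
    ext y
    simp only [Set.mem_iInter, Set.mem_setOf_eq]
    constructor
    · intro hy b' hb' q
      rw [show (ρ' b') (y q.1) = ((ρ' b').comp y) q.1 from rfl, hy b' hb']
      rfl
    · intro hy b' hb'
      ext g₀
      refine ext_inner_left ℂ fun h₀ => ?_
      exact hy b' hb' (g₀, h₀)
  rw [hset]
  refine isClosed_biInter fun b' _ => isClosed_iInter fun q => ?_
  have hfun : (fun y : G →L[ℂ] H => (inner ℂ q.2 ((ρ' b') (y q.1)) : ℂ))
      = fun y : G →L[ℂ] H =>
        (inner ℂ (ContinuousLinearMap.adjoint (ρ' b') q.2) (y q.1) : ℂ) := by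
    funext y
    rw [ContinuousLinearMap.adjoint_inner_left]
  exact isClosed_eq (hfun ▸ wot_cont q.1 (ContinuousLinearMap.adjoint (ρ' b') q.2))
    (wot_cont (b' q.1) q.2)

end Helpers

/-- the WOT-closure of a (not necessarily closed) pre-von Neumann `B`-module `E`
equals the intertwiner space of its commutant lifting. -/
theorem stmt5 (B : VonNeumannAlgebra G) (E : Submodule ℂ (G →L[ℂ] H))
    (hcomp : ∀ x ∈ E, ∀ b ∈ B, ContinuousLinearMap.comp x b ∈ E)
    (hadj : ∀ x ∈ E, ∀ y ∈ E, (ContinuousLinearMap.adjoint x).comp y ∈ B)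
    (hdense : SpansDensely (E : Set (G →L[ℂ] H)))
    (ρ' : (G →L[ℂ] G) → (H →L[ℂ] H))
    (hρ : ∀ b' ∈ B.commutant, ∀ x ∈ E, (ρ' b').comp x = x.comp b') :
    @closure _ (wot G H) (E : Set (G →L[ℂ] H))
      = {y : G →L[ℂ] H | ∀ b' ∈ B.commutant, (ρ' b').comp y = y.comp b'} 
    := by
  have hdense' : Dense ((Submodule.span ℂ {h : H | ∃ x ∈ E, ∃ g : G, x g = h} :
      Submodule ℂ H) : Set H) := hdense
  apply subset_antisymm
  · letI : TopologicalSpace (G →L[ℂ] H) := wot G H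
    have hsub : (E : Set (G →L[ℂ] H)) ⊆
        {y : G →L[ℂ] H | ∀ b' ∈ B.commutant, (ρ' b').comp y = y.comp b'} :=
      fun x hx b' hb' => hρ b' hb' x hx
    exact closure_minimal hsub (intertwiner_isClosed _ ρ')
  · intro y hy
    apply mem_closure_wot
    intro s ε hε
    classical
    set N : ℝ≥0 := s.sup fun p => ‖p.2‖₊ with hN
    have hN1 : (0:ℝ) < 1 + (N:ℝ) := by positivity
    have hε' : 0 < ε / (1 + (N:ℝ)) := div_pos hε hN1
    obtain ⟨x, hx, hlt⟩ := key_approx B E hcomp hdense' ρ' hρ y hy {p : G × H // p ∈ s}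
      (fun i => i.1.1) (ε / (1 + (N:ℝ))) hε'
    refine ⟨x, hx, fun p hp => ?_⟩
    have h2 : ‖(x - y) p.1‖ = ‖y p.1 - x p.1‖ := by
      rw [ContinuousLinearMap.sub_apply, norm_sub_rev]
    have h3 : ‖y p.1 - x p.1‖ < ε / (1 + (N:ℝ)) := hlt ⟨p, hp⟩
    have h4 : ‖p.2‖ ≤ 1 + (N:ℝ) := by
      have hle := Finset.le_sup (f := fun p : G × H => ‖p.2‖₊) hp
      have : ‖p.2‖ ≤ (N:ℝ) := by exact_mod_cast hle
      linarith
    calc ‖(inner ℂ p.2 ((x - y) p.1) : ℂ)‖ ≤ ‖p.2‖ * ‖(x - y) p.1‖ := norm_inner_le_norm _ _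
      _ ≤ (1 + (N:ℝ)) * ‖(x - y) p.1‖ := mul_le_mul_of_nonneg_right h4 (norm_nonneg _)
      _ < (1 + (N:ℝ)) * (ε / (1 + (N:ℝ))) := by
          rw [h2]; exact mul_lt_mul_of_pos_left h3 hN1
      _ = ε := mul_div_cancel₀ ε (ne_of_gt hN1)
end
end

section
/- Let B be a von Neumann algebra on a complex Hilbert space G and let E ⊆ B(G,H) be a concrete von Neumann B-module. Then A := {a ∈ B(H) : a∘x ∈ E and a*∘x ∈ E for all x ∈ E} is a unital *-subalgebra of B(H) that is closed in the weak operator topology of B(H) and equal to its double commutant in B(H); in particular, A is a von Neumann algebra on H. -/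
set_option synthInstance.maxHeartbeats 1000000
set_option maxHeartbeats 1000000
set_option linter.unusedSectionVars false

noncomputable section

variable {G H K : Type*}
  [NormedAddCommGroup G] [InnerProductSpace ℂ G] [CompleteSpace G]
  [NormedAddCommGroup H] [InnerProductSpace ℂ H] [CompleteSpace H]
  [NormedAddCommGroup K] [InnerProductSpace ℂ K] [CompleteSpace K]

/-- The adjointable operators of `E`, realized concretely inside `B(H)`. -/
def adjointableOps (E : Set (G →L[ℂ] H)) : Set (H →L[ℂ] H) :=
  {a : H →L[ℂ] H | ∀ x ∈ E, a.comp x ∈ E ∧ (ContinuousLinearMap.adjoint a).comp x ∈ E}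

open ContinuousLinearMap

namespace VNMod

variable (ι : Type*) [Fintype ι]

instance piLpComplete : CompleteSpace (PiLp 2 fun _ : ι => G) :=
  inferInstance

/-- diagonal amplification -/
def ampl (T : G →L[ℂ] H) : PiLp 2 (fun _ : ι => G) →L[ℂ] PiLp 2 (fun _ : ι => H) :=
  ((PiLp.continuousLinearEquiv 2 ℂ (fun _ : ι => H)).symm.toContinuousLinearMap).comp
    ((ContinuousLinearMap.pi fun i : ι => (T.comp (ContinuousLinearMap.proj i))).comp
      (PiLp.continuousLinearEquiv 2 ℂ (fun _ : ι => G)).toContinuousLinearMap)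

@[simp] lemma ampl_apply (T : G →L[ℂ] H) (v : PiLp 2 (fun _ : ι => G)) (i : ι) :
    ampl ι T v i = T (v i) := rfl

lemma ampl_comp (T : H →L[ℂ] K) (S : G →L[ℂ] H) :
    (ampl ι T).comp (ampl ι S) = ampl ι (T.comp S) := by
  ext v i; rfl

lemma ampl_add (T S : G →L[ℂ] H) (v : PiLp 2 (fun _ : ι => G)) :
    ampl ι (T + S) v = ampl ι T v + ampl ι S v := by
  ext i
  simp [ampl_apply, PiLp.add_apply]

lemma ampl_smul (c : ℂ) (T : G →L[ℂ] H) (v : PiLp 2 (fun _ : ι => G)) :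
    ampl ι (c • T) v = c • ampl ι T v := by
  ext i
  simp [ampl_apply, PiLp.smul_apply]

lemma ampl_zero (v : PiLp 2 (fun _ : ι => G)) :
    ampl ι (0 : G →L[ℂ] H) v = 0 := by
  ext i
  simp [ampl_apply, PiLp.zero_apply]

lemma ampl_adjoint (T : G →L[ℂ] H) : adjoint (ampl ι T) = ampl ι (adjoint T) := by
  symm
  rw [eq_adjoint_iff]
  intro x y
  simp [PiLp.inner_apply, ampl_apply, adjoint_inner_left]

lemma norm_apply_le {W : Type*} [NormedAddCommGroup W] [InnerProductSpace ℂ W]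
    (w : PiLp 2 (fun _ : ι => W)) (i : ι) : ‖w i‖ ≤ ‖w‖ := by
  have h : ‖w i‖ ^ 2 ≤ ‖w‖ ^ 2 := by
    rw [PiLp.norm_sq_eq_of_L2]
    exact Finset.single_le_sum (f := fun j => ‖w j‖ ^ 2) (fun j _ => by positivity)
      (Finset.mem_univ i)
  nlinarith [norm_nonneg w, norm_nonneg (w i)]

variable [DecidableEq ι]

def coordIncl (j : ι) : H →L[ℂ] PiLp 2 (fun _ : ι => H) :=
  ((PiLp.continuousLinearEquiv 2 ℂ (fun _ : ι => H)).symm.toContinuousLinearMap).comp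
    (ContinuousLinearMap.pi fun i : ι => if i = j then ContinuousLinearMap.id ℂ H else 0)

lemma coordIncl_apply (j : ι) (v : H) (i : ι) :
    coordIncl ι j v i = if i = j then v else 0 := by
  show (if i = j then ContinuousLinearMap.id ℂ H else 0) v = _
  by_cases h : i = j <;> simp [h]

def coordProj (i : ι) : PiLp 2 (fun _ : ι => H) →L[ℂ] H :=
  (ContinuousLinearMap.proj i).comp (PiLp.continuousLinearEquiv 2 ℂ _).toContinuousLinearMap

@[simp] lemma coordProj_apply (i : ι) (w : PiLp 2 (fun _ : ι => H)) :
    coordProj ι i w = w i := rfl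

lemma sum_coordIncl (v : PiLp 2 (fun _ : ι => H)) :
    ∑ j : ι, coordIncl ι j (v j) = v := by
  ext i
  have : (∑ j : ι, coordIncl ι j (v j)) i = coordProj ι i (∑ j : ι, coordIncl ι j (v j)) := rfl
  rw [this, map_sum]
  simp only [coordProj_apply, coordIncl_apply]
  simp

lemma coordIncl_comm (T : G →L[ℂ] H) (j : ι) (v : G) :
    coordIncl ι j (T v) = ampl ι T (coordIncl ι j v) := by
  ext i
  rw [coordIncl_apply, ampl_apply, coordIncl_apply]
  by_cases h : i = j <;> simp [h]

section proj

lemma closure_orthogonal (K' : Submodule ℂ H) : K'.topologicalClosureᗮ = K'ᗮ := by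
  refine le_antisymm (Submodule.orthogonal_le K'.le_topologicalClosure) ?_
  intro v hv
  rw [Submodule.mem_orthogonal] at hv ⊢
  intro u hu
  have hcl : u ∈ closure (K' : Set H) := by
    rw [← Submodule.topologicalClosure_coe]; exact hu
  have hclosed : IsClosed {w : H | inner ℂ w v = (0 : ℂ)} :=
    isClosed_eq (continuous_id.inner continuous_const) continuous_const
  exact hclosed.closure_subset_iff.2 (fun w hw => hv w hw) hcl

instance closureHasOrthProj (K' : Submodule ℂ H) :
    Submodule.HasOrthogonalProjection K'.topologicalClosure :=
  haveI : CompleteSpace K'.topologicalClosure :=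
    K'.isClosed_topologicalClosure.completeSpace_coe
  inferInstance

def starProj (K' : Submodule ℂ H) : H →L[ℂ] H :=
  K'.topologicalClosure.subtypeL.comp (Submodule.orthogonalProjectionOnto K'.topologicalClosure)

lemma starProj_eq_self {K' : Submodule ℂ H} {v : H} (hv : v ∈ K'.topologicalClosure) :
    starProj K' v = v :=
  Submodule.starProjection_eq_self_iff.2 hv

lemma starProj_eq_zero {K' : Submodule ℂ H} {v : H} (hv : v ∈ K'ᗮ) :
    starProj K' v = 0 := by
  have hv' : v ∈ K'.topologicalClosureᗮ := by rwa [closure_orthogonal]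
  have h := Submodule.orthogonalProjectionOnto_apply_of_mem_orthogonal
    (K := K'.topologicalClosure) hv'
  show (K'.topologicalClosure.subtypeL (Submodule.orthogonalProjectionOnto K'.topologicalClosure v) : H) = 0
  rw [h]; rfl

lemma starProj_mem (K' : Submodule ℂ H) (v : H) : starProj K' v ∈ K'.topologicalClosure :=
  Submodule.coe_mem (Submodule.orthogonalProjectionOnto K'.topologicalClosure v)

lemma sub_starProj_mem (K' : Submodule ℂ H) (v : H) : v - starProj K' v ∈ K'ᗮ := by
  rw [← closure_orthogonal]
  exact Submodule.sub_starProjection_mem_orthogonal v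

lemma starProj_comm (K' : Submodule ℂ G) (L : Submodule ℂ H) (T : G →L[ℂ] H)
    (h1 : ∀ v ∈ K', T v ∈ L.topologicalClosure)
    (h2 : ∀ v ∈ K'ᗮ, T v ∈ Lᗮ) :
    (starProj L).comp T = T.comp (starProj K') := by
  ext v
  have ha : starProj K' v ∈ K'.topologicalClosure := starProj_mem K' v
  have hTa : T (starProj K' v) ∈ L.topologicalClosure := by
    have hclosed : IsClosed (T ⁻¹' (L.topologicalClosure : Set H)) :=
      (L.isClosed_topologicalClosure).preimage T.continuous
    have hsub : (K' : Set G) ⊆ T ⁻¹' (L.topologicalClosure : Set H) := fun w hw => h1 w hw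
    have hss : closure (K' : Set G) ⊆ T ⁻¹' (L.topologicalClosure : Set H) :=
      hclosed.closure_subset_iff.2 hsub
    refine hss ?_
    rw [← Submodule.topologicalClosure_coe]; exact ha
  have key : starProj L (T v) = T (starProj K' v) := by
    have hdecomp : T v = T (starProj K' v) + T (v - starProj K' v) := by
      rw [← map_add]; congr 1; abel
    rw [hdecomp, map_add, starProj_eq_self hTa,
      starProj_eq_zero (h2 _ (sub_starProj_mem K' v)), add_zero]
  simpa using key

end proj

end VNMod
namespace VNMod

section module

variable (B : VonNeumannAlgebra G) (E : Set (G →L[ℂ] H))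

/-- the pairs (d, b') implementing commutant elements on `E` -/
def IsDPair (d : H →L[ℂ] H) (b' : G →L[ℂ] G) : Prop :=
  b' ∈ Set.centralizer (B : Set (G →L[ℂ] G)) ∧ ∀ x ∈ E, d.comp x = x.comp b'

def Dset : Set (H →L[ℂ] H) := {d | ∃ b', IsDPair B E d b'}

variable {B E}

/-- two operators out of `H` agreeing on all `x g` agree -/
lemma ext_of_dense (hE : IsConcreteVNModule B E) {u v : H →L[ℂ] K} (h : ∀ x ∈ E, ∀ g : G, u (x g) = v (x g)) :
    u = v := by
  ext w
  have hd : Dense ((Submodule.span ℂ {h : H | ∃ x ∈ E, ∃ g : G, x g = h} : Submodule ℂ H)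
      : Set H) := hE.dense
  have hsub : ((Submodule.span ℂ {h : H | ∃ x ∈ E, ∃ g : G, x g = h} : Submodule ℂ H) : Set H)
      ⊆ {w : H | u w = v w} := by
    intro w hw
    refine Submodule.span_induction ?_ (by simp) ?_ ?_ hw
    · rintro _ ⟨x, hx, g, rfl⟩; exact h x hx g
    · intro a b _ _ ha hb; simp only [Set.mem_setOf_eq, map_add] at *; rw [ha, hb]
    · intro c a _ ha; simp only [Set.mem_setOf_eq, map_smul] at *; rw [ha]
  have hclosed : IsClosed {w : H | u w = v w} := isClosed_eq u.continuous v.continuous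
  exact hclosed.closure_subset_iff.2 hsub (hd w)

/-- a vector orthogonal to all `x g` vanishes -/
lemma eq_zero_of_inner (hE : IsConcreteVNModule B E) (w : H) (h : ∀ x ∈ E, ∀ g : G, inner ℂ (x g) w = (0 : ℂ)) : w = 0 := by
  set S : Submodule ℂ H := Submodule.span ℂ {h : H | ∃ x ∈ E, ∃ g : G, x g = h} with hS
  have hw : w ∈ Sᗮ := by
    rw [Submodule.mem_orthogonal]
    intro u hu
    refine Submodule.span_induction ?_ (by simp) ?_ ?_ hu
    · rintro _ ⟨x, hx, g, rfl⟩; exact h x hx g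
    · intro a b _ _ ha hb; rw [inner_add_left, ha, hb, add_zero]
    · intro c a _ ha; rw [inner_smul_left, ha, mul_zero]
  have htop : S.topologicalClosure = ⊤ := by
    rw [← Submodule.dense_iff_topologicalClosure_eq_top]
    exact hE.dense
  have hbot : Sᗮ = ⊥ := by rwa [Submodule.topologicalClosure_eq_top_iff] at htop
  simpa [hbot] using hw

/-- D is star-closed at the level of pairs -/
lemma isDPair_adjoint (hE : IsConcreteVNModule B E) {d : H →L[ℂ] H} {b' : G →L[ℂ] G} (hd : IsDPair B E d b') :
    IsDPair B E (adjoint d) (adjoint b') := by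
  obtain ⟨hb', hdb⟩ := hd
  constructor
  · intro b hb
    have h1 : (star b) * b' = b' * (star b) := hb' (star b) (star_mem hb)
    have h2 := congrArg star h1
    simpa [star_mul, star_eq_adjoint] using h2.symm
  · intro x hx
    ext v
    show adjoint d (x v) = x (adjoint b' v)
    set bb : G →L[ℂ] G := (adjoint x) ∘L x with hbbdef
    have key : ∀ z ∈ E, ∀ g : G,
        inner ℂ (z g) (adjoint d (x v) - x (adjoint b' v)) = (0 : ℂ) := by
      intro z hz g
      rw [inner_sub_right]
      set zb : G →L[ℂ] G := (adjoint z) ∘L x with hzb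
      have hzbB : zb ∈ B := hE.adjoint_comp_mem z hz x hx
      have hcomm : adjoint b' * zb = zb * adjoint b' := by
        have h1 : (star zb) * b' = b' * (star zb) := hb' (star zb) (star_mem hzbB)
        have h2 := congrArg star h1
        simpa [star_mul, star_eq_adjoint] using h2
      have hz' : d (z g) = z (b' g) := by
        have h := hdb z hz
        calc d (z g) = (d.comp z) g := rfl
          _ = (z.comp b') g := by rw [h]
          _ = z (b' g) := rfl
      have lhs : (inner ℂ (z g) (adjoint d (x v)) : ℂ) = inner ℂ g (adjoint b' (zb v)) := by
        calc (inner ℂ (z g) (adjoint d (x v)) : ℂ)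
            = inner ℂ (d (z g)) (x v) := by rw [adjoint_inner_right]
          _ = inner ℂ (z (b' g)) (x v) := by rw [hz']
          _ = inner ℂ (b' g) (adjoint z (x v)) := (adjoint_inner_right z (b' g) (x v)).symm
          _ = inner ℂ (b' g) (zb v) := rfl
          _ = inner ℂ g (adjoint b' (zb v)) := (adjoint_inner_right b' g (zb v)).symm
      have rhs : (inner ℂ (z g) (x (adjoint b' v)) : ℂ) = inner ℂ g (zb (adjoint b' v)) := by
        calc (inner ℂ (z g) (x (adjoint b' v)) : ℂ)
            = inner ℂ g (adjoint z (x (adjoint b' v))) :=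
              (adjoint_inner_right z g (x (adjoint b' v))).symm
          _ = inner ℂ g (zb (adjoint b' v)) := rfl
      have hswap : zb (adjoint b' v) = adjoint b' (zb v) := by
        have := congrArg (fun T : G →L[ℂ] G => T v) hcomm
        simpa [ContinuousLinearMap.mul_apply] using this.symm
      rw [lhs, rhs, hswap, sub_self]
    have hz0 := eq_zero_of_inner hE _ key
    exact sub_eq_zero.mp hz0

end module

end VNMod

namespace VNMod

section crux

variable (ι : Type*) [Fintype ι] [DecidableEq ι]
variable (B : VonNeumannAlgebra G) (E : Set (G →L[ℂ] H))

def Bsub (g : PiLp 2 fun _ : ι => G) : Submodule ℂ (PiLp 2 fun _ : ι => G) where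
  carrier := {v | ∃ b, b ∈ B ∧ ampl ι b g = v}
  zero_mem' := ⟨0, zero_mem _, ampl_zero ι g⟩
  add_mem' := by
    rintro v w ⟨b, hb, rfl⟩ ⟨c, hc, rfl⟩
    exact ⟨b + c, add_mem hb hc, ampl_add ι b c g⟩
  smul_mem' := by
    rintro c v ⟨b, hb, rfl⟩
    refine ⟨c • b, ?_, ampl_smul ι c b g⟩
    have : c • b = (algebraMap ℂ (G →L[ℂ] G) c) * b := by
      rw [Algebra.algebraMap_eq_smul_one]; simp [smul_mul_assoc]
    rw [this]
    exact mul_mem (B.toStarSubalgebra.algebraMap_mem c) hb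

def Esub (hE : IsConcreteVNModule B E) (g : PiLp 2 fun _ : ι => G) :
    Submodule ℂ (PiLp 2 fun _ : ι => H) where
  carrier := {w | ∃ x, x ∈ E ∧ ampl ι x g = w}
  zero_mem' := ⟨0, hE.zero_mem, ampl_zero ι g⟩
  add_mem' := by
    rintro v w ⟨x, hx, rfl⟩ ⟨z, hz, rfl⟩
    exact ⟨x + z, hE.add_mem x hx z hz, ampl_add ι x z g⟩
  smul_mem' := by
    rintro c v ⟨x, hx, rfl⟩
    exact ⟨c • x, hE.smul_mem c x hx, ampl_smul ι c x g⟩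

variable {ι B E}

lemma projB_comm (g : PiLp 2 fun _ : ι => G) {b : G →L[ℂ] G} (hb : b ∈ B) :
    (starProj (Bsub ι B g)).comp (ampl ι b) = (ampl ι b).comp (starProj (Bsub ι B g)) := by
  apply starProj_comm
  · rintro v ⟨b₀, hb₀, rfl⟩
    apply Submodule.le_topologicalClosure
    refine ⟨b * b₀, mul_mem hb hb₀, ?_⟩
    show ampl ι (b * b₀) g = (ampl ι b) ((ampl ι b₀) g)
    rw [← ContinuousLinearMap.comp_apply, ampl_comp]
    rfl
  · intro v hv
    rw [Submodule.mem_orthogonal] at hv ⊢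
    rintro u ⟨b₀, hb₀, rfl⟩
    have key : (inner ℂ (ampl ι b₀ g) (ampl ι b v) : ℂ)
        = inner ℂ (ampl ι ((adjoint b).comp b₀) g) v := by
      calc (inner ℂ (ampl ι b₀ g) (ampl ι b v) : ℂ)
          = inner ℂ (adjoint (ampl ι b) (ampl ι b₀ g)) v := by rw [adjoint_inner_left]
        _ = inner ℂ (ampl ι (adjoint b) (ampl ι b₀ g)) v := by rw [ampl_adjoint]
        _ = inner ℂ ((ampl ι (adjoint b)).comp (ampl ι b₀) g) v := rfl
        _ = inner ℂ (ampl ι ((adjoint b).comp b₀) g) v := by rw [ampl_comp]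
    rw [key]
    refine hv _ ⟨(adjoint b) * b₀, ?_, rfl⟩
    exact mul_mem (by rw [← star_eq_adjoint]; exact star_mem hb) hb₀

lemma projE_comm (hE : IsConcreteVNModule B E) (g : PiLp 2 fun _ : ι => G)
    {x : G →L[ℂ] H} (hx : x ∈ E) :
    (starProj (Esub ι B E hE g)).comp (ampl ι x) = (ampl ι x).comp (starProj (Bsub ι B g)) := by
  apply starProj_comm
  · rintro v ⟨b₀, hb₀, rfl⟩
    apply Submodule.le_topologicalClosure
    refine ⟨x.comp b₀, hE.comp_mem x hx b₀ hb₀, ?_⟩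
    show ampl ι (x.comp b₀) g = (ampl ι x) ((ampl ι b₀) g)
    rw [← ContinuousLinearMap.comp_apply, ampl_comp]
  · intro v hv
    rw [Submodule.mem_orthogonal] at hv ⊢
    rintro u ⟨z, hz, rfl⟩
    have key : (inner ℂ (ampl ι z g) (ampl ι x v) : ℂ)
        = inner ℂ (ampl ι ((adjoint x).comp z) g) v := by
      calc (inner ℂ (ampl ι z g) (ampl ι x v) : ℂ)
          = inner ℂ (adjoint (ampl ι x) (ampl ι z g)) v := by rw [adjoint_inner_left]
        _ = inner ℂ (ampl ι (adjoint x) (ampl ι z g)) v := by rw [ampl_adjoint]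
        _ = inner ℂ ((ampl ι (adjoint x)).comp (ampl ι z) g) v := rfl
        _ = inner ℂ (ampl ι ((adjoint x).comp z) g) v := by rw [ampl_comp]
    rw [key]
    exact hv _ ⟨(adjoint x).comp z, hE.adjoint_comp_mem x hx z hz, rfl⟩

lemma amply_mem_closure (hE : IsConcreteVNModule B E) (y : G →L[ℂ] H)
    (hy : ∀ d b', IsDPair B E d b' → d.comp y = y.comp b')
    (g : PiLp 2 fun _ : ι => G) :
    ampl ι y g ∈ (Esub ι B E hE g).topologicalClosure := by
  set M := Bsub ι B g with hM
  set N := Esub ι B E hE g with hN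
  set dE : ι → ι → (H →L[ℂ] H) :=
    fun p q => (coordProj ι p).comp ((starProj N).comp (coordIncl ι q)) with hdE
  set bE : ι → ι → (G →L[ℂ] G) :=
    fun p q => (coordProj ι p).comp ((starProj M).comp (coordIncl ι q)) with hbE
  have hpair : ∀ p q, IsDPair B E (dE p q) (bE p q) := by
    intro p q
    constructor
    · intro b hb
      ext v
      show b ((starProj M (coordIncl ι q v)) p) = (starProj M (coordIncl ι q (b v))) p
      rw [coordIncl_comm ι b q v]
      have h2 := ContinuousLinearMap.ext_iff.1 (projB_comm g hb) (coordIncl ι q v)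
      simp only [ContinuousLinearMap.comp_apply] at h2
      rw [h2, ampl_apply]
    · intro x hx
      ext v
      show (starProj N (coordIncl ι q (x v))) p = x ((starProj M (coordIncl ι q v)) p)
      rw [coordIncl_comm ι x q v]
      have h2 := ContinuousLinearMap.ext_iff.1 (projE_comm hE g hx) (coordIncl ι q v)
      simp only [ContinuousLinearMap.comp_apply] at h2
      rw [h2, ampl_apply]
  have hg : g ∈ M.topologicalClosure := by
    apply Submodule.le_topologicalClosure
    refine ⟨1, one_mem _, ?_⟩
    ext i
    simp only [ampl_apply]
    rfl
  have hyd : ∀ p q, (dE p q).comp y = y.comp (bE p q) := fun p q => hy _ _ (hpair p q)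
  have hsumy : ampl ι y g = ∑ q, coordIncl ι q (y (g q)) := by
    have := sum_coordIncl ι (ampl ι y g)
    simp only [ampl_apply] at this
    exact this.symm
  have hsumg : g = ∑ q, coordIncl ι q (g q) := (sum_coordIncl ι g).symm
  have main : starProj N (ampl ι y g) = ampl ι y g := by
    ext i
    calc (starProj N (ampl ι y g)) i
        = coordProj ι i (starProj N (∑ q, coordIncl ι q (y (g q)))) := by rw [← hsumy]; rfl
      _ = ∑ q, coordProj ι i (starProj N (coordIncl ι q (y (g q)))) := by
          rw [map_sum, map_sum]
      _ = ∑ q, dE i q (y (g q)) := rfl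
      _ = ∑ q, y (bE i q (g q)) := by
          refine Finset.sum_congr rfl fun q _ => ?_
          have h := ContinuousLinearMap.ext_iff.1 (hyd i q) (g q)
          simpa using h
      _ = y (coordProj ι i (starProj M (∑ q, coordIncl ι q (g q)))) := by
          simp only [← map_sum]
          congr 1
          rw [map_sum, map_sum]
          rfl
      _ = y ((starProj M g) i) := by rw [← hsumg]; rfl
      _ = y (g i) := by rw [starProj_eq_self hg]
      _ = (ampl ι y g) i := rfl
  rw [← main]
  exact starProj_mem N _

end crux

end VNMod

namespace VNMod

section wotlemmas

lemma wot_eval_continuous (g : G) (h : H) :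
    @Continuous _ _ (wot G H) _ (fun T : G →L[ℂ] H => (inner ℂ h (T g) : ℂ)) := by
  unfold wot
  exact continuous_iInf_dom (i := (g, h)) continuous_induced_dom

lemma isClosed_centralizer_wot (S : Set (H →L[ℂ] H)) :
    @IsClosed _ (wot H H) (Set.centralizer S) := by
  have heq : Set.centralizer S = ⋂ d ∈ S, ⋂ (v : H), ⋂ (h : H),
      {c : H →L[ℂ] H | (inner ℂ h (d (c v)) : ℂ) = inner ℂ h (c (d v))} := by
    ext c
    simp only [Set.mem_centralizer_iff, Set.mem_iInter, Set.mem_setOf_eq]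
    constructor
    · intro hc d hd v h
      have := congrArg (fun T : H →L[ℂ] H => (inner ℂ h (T v) : ℂ)) (hc d hd)
      simpa [ContinuousLinearMap.mul_apply] using this
    · intro hc d hd
      ext v
      rw [ContinuousLinearMap.mul_apply, ContinuousLinearMap.mul_apply]
      exact ext_inner_left ℂ fun h => hc d hd v h
  letI : TopologicalSpace (H →L[ℂ] H) := wot H H
  rw [heq]
  refine isClosed_biInter fun d hd => isClosed_iInter fun v => isClosed_iInter fun h => ?_
  have h1 : (fun c : H →L[ℂ] H => (inner ℂ h (d (c v)) : ℂ))
      = fun c : H →L[ℂ] H => (inner ℂ (adjoint d h) (c v) : ℂ) := by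
    funext c
    rw [adjoint_inner_left]
  refine isClosed_eq ?_ ?_
  · rw [h1]
    exact wot_eval_continuous v (adjoint d h)
  · exact wot_eval_continuous (d v) h

end wotlemmas

section main

variable {B : VonNeumannAlgebra G} {E : Set (G →L[ℂ] H)}

/-- the crux: any `y` intertwining all D-pairs belongs to `E` -/
lemma mem_of_intertwine (hE : IsConcreteVNModule B E) (y : G →L[ℂ] H)
    (hy : ∀ d b', IsDPair B E d b' → d.comp y = y.comp b') : y ∈ E := by
  letI : TopologicalSpace (G →L[ℂ] H) := wot G H
  have hclosed : IsClosed E := hE.isClosed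
  have hyc : y ∈ closure E := by
    rw [mem_closure_iff_nhds]
    intro t ht
    have hn : nhds y = ⨅ p : G × H,
        Filter.comap (fun T : G →L[ℂ] H => (inner ℂ p.2 (T p.1) : ℂ))
          (nhds (inner ℂ p.2 (y p.1) : ℂ)) := by
      show @nhds _ (wot G H) y = _
      rw [wot, nhds_iInf]
      exact iInf_congr fun p =>
        @nhds_induced _ _ _ (fun T : G →L[ℂ] H => (inner ℂ p.2 (T p.1) : ℂ)) y
    rw [hn, Filter.mem_iInf] at ht
    obtain ⟨I, Ifin, V, hV, rfl⟩ := ht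
    haveI : Fintype I := Ifin.fintype
    haveI : DecidableEq I := Classical.decEq _
    have hball : ∀ p : I, ∃ ε > (0:ℝ), ∀ c : G →L[ℂ] H,
        dist (inner ℂ (p:G×H).2 (c (p:G×H).1) : ℂ) (inner ℂ (p:G×H).2 (y (p:G×H).1) : ℂ) < ε →
          c ∈ V p := by
      intro p
      have hVp := hV p
      rw [Filter.mem_comap] at hVp
      obtain ⟨s, hs, hsub⟩ := hVp
      rw [Metric.mem_nhds_iff] at hs
      obtain ⟨ε, hε, hball⟩ := hs
      exact ⟨ε, hε, fun c hc => hsub (hball (by simpa [Metric.mem_ball] using hc))⟩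
    choose ε hε hsub using hball
    set g : PiLp 2 (fun _ : I => G) := WithLp.toLp 2 (fun p : I => (p : G × H).1) with hgdef
    have hmem := amply_mem_closure (ι := I) hE y hy g
    rcases isEmpty_or_nonempty I with hI | hI
    · refine ⟨0, ?_, hE.zero_mem⟩
      simp
    · set δ : ℝ := (Finset.univ.inf' Finset.univ_nonempty
        fun p : I => ε p / (1 + ‖(p : G × H).2‖)) with hδdef
      have hδpos : 0 < δ := by
        rw [hδdef, Finset.lt_inf'_iff]
        intro p _
        have := hε p
        positivity
      have hcl : ampl I y g ∈ closure ((Esub I B E hE g : Set (PiLp 2 fun _ : I => H))) := by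
        rw [← Submodule.topologicalClosure_coe]
        exact hmem
      rw [Metric.mem_closure_iff] at hcl
      obtain ⟨w, hw, hdist⟩ := hcl δ hδpos
      obtain ⟨x, hx, rfl⟩ := hw
      refine ⟨x, ?_, hx⟩
      rw [Set.mem_iInter]
      intro p
      apply hsub p
      have hcoord : ‖x (g p) - y (g p)‖ ≤ dist (ampl I y g) (ampl I x g) := by
        rw [dist_eq_norm]
        have h1 : x (g p) - y (g p) = -(((ampl I y g) - (ampl I x g)) p) := by
          rw [PiLp.sub_apply]
          simp [ampl_apply]
        rw [h1, norm_neg]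
        exact norm_apply_le I (ampl I y g - ampl I x g) p
      have hgp : (g p) = (p : G × H).1 := rfl
      rw [dist_eq_norm, ← inner_sub_right]
      have hb1 : ‖(inner ℂ (p : G × H).2 (x (p : G×H).1 - y (p : G×H).1) : ℂ)‖
          ≤ ‖(p : G × H).2‖ * ‖x (p : G×H).1 - y (p : G×H).1‖ := norm_inner_le_norm _ _
      have hb2 : ‖x (p : G×H).1 - y (p : G×H).1‖ < δ := by
        rw [← hgp]
        exact lt_of_le_of_lt hcoord hdist
      have hδle : δ ≤ ε p / (1 + ‖(p : G × H).2‖) := by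
        rw [hδdef]
        exact Finset.inf'_le _ (Finset.mem_univ p)
      have hfin : ‖(p : G × H).2‖ * ‖x (p : G×H).1 - y (p : G×H).1‖ < ε p := by
        set n := ‖(p : G × H).2‖ with hn
        set dd := ‖x (p : G×H).1 - y (p : G×H).1‖ with hdd
        have hn0 : 0 ≤ n := norm_nonneg _
        have hd0 : 0 ≤ dd := norm_nonneg _
        have hr : dd < ε p / (1 + n) := lt_of_lt_of_le hb2 hδle
        have h1n : (0:ℝ) < 1 + n := by linarith
        have h2 : dd * (1 + n) < ε p := (lt_div_iff₀ h1n).1 hr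
        nlinarith
      calc ‖(inner ℂ (p : G × H).2 (x (p : G×H).1 - y (p : G×H).1) : ℂ)‖
          ≤ ‖(p : G × H).2‖ * ‖x (p : G×H).1 - y (p : G×H).1‖ := hb1
        _ < ε p := hfin
  rwa [hclosed.closure_eq] at hyc

lemma adjointableOps_eq_centralizer (hE : IsConcreteVNModule B E) :
    adjointableOps E = Set.centralizer (Dset B E) := by
  ext a
  constructor
  · intro ha
    rw [Set.mem_centralizer_iff]
    rintro d ⟨b', hb', hdb⟩
    apply ext_of_dense hE
    intro x hx v
    have hax : a.comp x ∈ E := (ha x hx).1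
    have h1 : d ((a.comp x) v) = (a.comp x) (b' v) := by
      have := ContinuousLinearMap.ext_iff.1 (hdb _ hax) v
      simpa using this
    have h2 : d (x v) = x (b' v) := by
      have := ContinuousLinearMap.ext_iff.1 (hdb _ hx) v
      simpa using this
    show d (a (x v)) = a (d (x v))
    rw [h2]
    exact h1
  · intro ha
    rw [Set.mem_centralizer_iff] at ha
    have hstar : ∀ c ∈ Set.centralizer (Dset B E), ∀ x ∈ E, c.comp x ∈ E := by
      intro c hc x hx
      apply mem_of_intertwine hE
      rintro d b' ⟨hb', hdb⟩
      have hcd : d * c = c * d := hc d ⟨b', hb', hdb⟩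
      calc d.comp (c.comp x) = (d.comp c).comp x := by rw [ContinuousLinearMap.comp_assoc]
        _ = (c.comp d).comp x := by
            have : d.comp c = c.comp d := hcd
            rw [this]
        _ = c.comp (d.comp x) := by rw [ContinuousLinearMap.comp_assoc]
        _ = c.comp (x.comp b') := by rw [hdb x hx]
        _ = (c.comp x).comp b' := by rw [ContinuousLinearMap.comp_assoc]
    intro x hx
    constructor
    · exact hstar a (Set.mem_centralizer_iff.2 ha) x hx
    · refine hstar (adjoint a) ?_ x hx
      rw [Set.mem_centralizer_iff]
      rintro d ⟨b', hb', hdb⟩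
      have hd' : adjoint d ∈ Dset B E := ⟨adjoint b', isDPair_adjoint hE ⟨hb', hdb⟩⟩
      have h1 : (adjoint d) * a = a * (adjoint d) := ha _ hd'
      have h2 := congrArg star h1
      simpa [star_mul, star_eq_adjoint] using h2.symm

end main

end VNMod

open VNMod in
/-- for a concrete von Neumann `B`-module `E`, the adjointable operators form a
unital `*`-subalgebra of `B(H)` that is WOT-closed and equal to its double commutant, i.e. a
von Neumann algebra on `H`. -/
theorem stmt6 (B : VonNeumannAlgebra G) (E : Set (G →L[ℂ] H))
    (hE : IsConcreteVNModule B E) :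
    (1 : H →L[ℂ] H) ∈ adjointableOps E ∧
    (∀ a ∈ adjointableOps E, ∀ b ∈ adjointableOps E, a + b ∈ adjointableOps E) ∧
    (∀ (c : ℂ), ∀ a ∈ adjointableOps E, c • a ∈ adjointableOps E) ∧
    (∀ a ∈ adjointableOps E, ∀ b ∈ adjointableOps E, a * b ∈ adjointableOps E) ∧
    (∀ a ∈ adjointableOps E, star a ∈ adjointableOps E) ∧
    @IsClosed _ (wot H H) (adjointableOps E) ∧
    Set.centralizer (Set.centralizer (adjointableOps E)) = adjointableOps E ∧
    ∃ W : VonNeumannAlgebra H, (W : Set (H →L[ℂ] H)) = adjointableOps E := by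
  have hone : (1 : H →L[ℂ] H) ∈ adjointableOps E := by
    intro x hx
    constructor
    · simpa [ContinuousLinearMap.one_def] using hx
    · have : adjoint (1 : H →L[ℂ] H) = 1 := adjoint_id
      rw [this]
      simpa [ContinuousLinearMap.one_def] using hx
  have hadd : ∀ a ∈ adjointableOps E, ∀ b ∈ adjointableOps E, a + b ∈ adjointableOps E := by
    intro a ha b hb x hx
    constructor
    · rw [ContinuousLinearMap.add_comp]
      exact hE.add_mem _ (ha x hx).1 _ (hb x hx).1
    · rw [map_add, ContinuousLinearMap.add_comp]
      exact hE.add_mem _ (ha x hx).2 _ (hb x hx).2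
  have hsmul : ∀ (c : ℂ), ∀ a ∈ adjointableOps E, c • a ∈ adjointableOps E := by
    intro c a ha x hx
    constructor
    · rw [ContinuousLinearMap.smul_comp]
      exact hE.smul_mem c _ (ha x hx).1
    · have : adjoint (c • a) = (starRingEnd ℂ c) • adjoint a := by
        rw [← star_eq_adjoint, ← star_eq_adjoint, star_smul]
        rfl
      rw [this, ContinuousLinearMap.smul_comp]
      exact hE.smul_mem _ _ (ha x hx).2
  have hmul : ∀ a ∈ adjointableOps E, ∀ b ∈ adjointableOps E, a * b ∈ adjointableOps E := by
    intro a ha b hb x hx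
    constructor
    · have : (a * b).comp x = a.comp (b.comp x) := by
        rw [ContinuousLinearMap.mul_def, ContinuousLinearMap.comp_assoc]
      rw [this]
      exact (ha _ (hb x hx).1).1
    · have : adjoint (a * b) = (adjoint b) * (adjoint a) := by
        rw [ContinuousLinearMap.mul_def, adjoint_comp]
        rfl
      rw [this, ContinuousLinearMap.mul_def, ContinuousLinearMap.comp_assoc]
      exact (hb _ (ha x hx).2).2
  have hstar : ∀ a ∈ adjointableOps E, star a ∈ adjointableOps E := by
    intro a ha x hx
    rw [star_eq_adjoint]
    constructor
    · exact (ha x hx).2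
    · rw [adjoint_adjoint]
      exact (ha x hx).1
  have hcent := adjointableOps_eq_centralizer hE
  have hclosed : @IsClosed _ (wot H H) (adjointableOps E) := by
    rw [hcent]
    exact isClosed_centralizer_wot _
  have hcc : Set.centralizer (Set.centralizer (adjointableOps E)) = adjointableOps E := by
    rw [hcent, Set.centralizer_centralizer_centralizer]
  refine ⟨hone, hadd, hsmul, hmul, hstar, hclosed, hcc, ?_⟩
  refine ⟨⟨{ carrier := adjointableOps E
           , mul_mem' := fun {a b} ha hb => hmul a ha b hb
           , one_mem' := hone
           , add_mem' := fun {a b} ha hb => hadd a ha b hb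
           , zero_mem' := by simpa using hsmul 0 1 hone
           , algebraMap_mem' := fun c => by
               have : algebraMap ℂ (H →L[ℂ] H) c = c • 1 := Algebra.algebraMap_eq_smul_one c
               rw [this]
               exact hsmul c 1 hone
           , star_mem' := fun {a} ha => hstar a ha }, hcc⟩, rfl⟩
end
end

section
/- Let G and H be complex Hilbert spaces and let E ⊆ B(G,H) be a complex linear subspace that is closed in the weak operator topology, satisfies x∘a ∈ E for all x ∈ E and a ∈ B(G), and is such that span{x g : x ∈ E, g ∈ G} is dense in H. Then E = B(G,H). (In other words, every concrete von Neumann module over the full operator algebra B(G) is all of B(G,H).) -/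
noncomputable section

variable {G H K : Type*}
  [NormedAddCommGroup G] [InnerProductSpace ℂ G] [CompleteSpace G]
  [NormedAddCommGroup H] [InnerProductSpace ℂ H] [CompleteSpace H]
  [NormedAddCommGroup K] [InnerProductSpace ℂ K] [CompleteSpace K]

set_option linter.unusedSectionVars false

lemma norm_le_wot : (inferInstance : TopologicalSpace (G →L[ℂ] H)) ≤ wot G H := by
  refine le_iInf fun p => ?_
  rw [← continuous_iff_le_induced]
  exact (innerSL ℂ p.2).continuous.comp (ContinuousLinearMap.apply ℂ H p.1).continuous

/-- the rank one operator `g' ↦ ⟪g,g'⟫ • h`. -/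
def rankOne (h : H) (g : G) : G →L[ℂ] H :=
  (ContinuousLinearMap.toSpanSingleton ℂ h).comp (innerSL ℂ g)

lemma rankOne_apply (h : H) (g g' : G) : rankOne h g g' = (inner ℂ g g' : ℂ) • h := rfl

/-- `h ↦ rankOne h g` as a continuous linear map. -/
def rankOneCLM (g : G) : H →L[ℂ] (G →L[ℂ] H) :=
  LinearMap.mkContinuous
    { toFun := fun h => rankOne h g
      map_add' := by intro a b; ext g'; simp [rankOne_apply, smul_add]
      map_smul' := by
        intro c a; ext g'
        simp only [rankOne_apply, LinearMap.smul_apply, ContinuousLinearMap.coe_smul',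
          Pi.smul_apply, smul_smul, RingHom.id_apply]
        rw [mul_comm] }
    ‖g‖ (by
      intro h
      refine ContinuousLinearMap.opNorm_le_bound _ (by positivity) fun g' => ?_
      simp only [LinearMap.coe_mk, AddHom.coe_mk, rankOne_apply, norm_smul]
      calc ‖(inner ℂ g g' : ℂ)‖ * ‖h‖ ≤ ‖g‖ * ‖g'‖ * ‖h‖ := by
            gcongr; exact norm_inner_le_norm g g'
        _ = ‖g‖ * ‖h‖ * ‖g'‖ := by ring)

lemma rankOneCLM_apply (g : G) (h : H) : rankOneCLM g h = rankOne h g := rfl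

lemma wot_mem_of_closed {E : Set (G →L[ℂ] H)} (hclosed : @IsClosed _ (wot G H) E)
    {A : Finset G → (G →L[ℂ] H)} {T : G →L[ℂ] H}
    (hconv : Filter.Tendsto A Filter.atTop (@nhds _ (wot G H) T))
    (hmem : ∀ s, A s ∈ E) : T ∈ E := by
  letI : TopologicalSpace (G →L[ℂ] H) := wot G H
  exact hclosed.mem_of_tendsto hconv (Filter.Eventually.of_forall hmem)

/-- a WOT-closed subspace `E ⊆ B(G,H)` with `x ∘ a ∈ E` for every `a ∈ B(G)`
and acting nondegenerately on `G` is all of `B(G,H)`. -/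
theorem stmt7 (E : Submodule ℂ (G →L[ℂ] H))
    (hclosed : @IsClosed _ (wot G H) (E : Set (G →L[ℂ] H)))
    (hcomp : ∀ x ∈ E, ∀ a : G →L[ℂ] G, ContinuousLinearMap.comp x a ∈ E)
    (hdense : SpansDensely (E : Set (G →L[ℂ] H))) :
    (E : Set (G →L[ℂ] H)) = Set.univ := by
  -- E is norm-closed
  have hnormclosed : IsClosed (E : Set (G →L[ℂ] H)) :=
    hclosed.mono norm_le_wot
  -- rank-one operators with generator h all lie in E
  have hrank : ∀ (h : H) (g : G), rankOne h g ∈ E := by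
    intro h g
    have hpre : IsClosed ((rankOneCLM (H := H) g) ⁻¹' (E : Set (G →L[ℂ] H))) :=
      hnormclosed.preimage (rankOneCLM g).continuous
    have hsub : ((Submodule.span ℂ {h : H | ∃ x ∈ (E : Set (G →L[ℂ] H)), ∃ g : G, x g = h} :
        Submodule ℂ H) : Set H) ⊆ (rankOneCLM (H := H) g) ⁻¹' (E : Set (G →L[ℂ] H)) := by
      intro h' hh'
      have : h' ∈ Submodule.comap (rankOneCLM (H := H) g : H →ₗ[ℂ] (G →L[ℂ] H)) E := by
        refine Submodule.span_le.mpr ?_ hh'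
        rintro _ ⟨x, hx, u, rfl⟩
        show rankOneCLM g (x u) ∈ E
        rw [rankOneCLM_apply]
        have : rankOne (x u) g = x.comp (rankOne u g) := by
          ext g'; simp [rankOne_apply]
        rw [this]
        exact hcomp x hx _
      exact this
    have := hpre.closure_subset_iff.mpr hsub
    have hall : (Set.univ : Set H) ⊆ (rankOneCLM (H := H) g) ⁻¹' (E : Set (G →L[ℂ] H)) := by
      rw [← hdense.closure_eq]; exact this
    exact hall (Set.mem_univ h)
  -- now finite-rank approximation
  ext T
  simp only [Set.mem_univ, iff_true]
  -- the approximating net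
  set A : Finset G → (G →L[ℂ] H) := fun s =>
    T.comp ((Submodule.span ℂ (s : Set G)).subtypeL.comp
      (Submodule.orthogonalProjectionOnto (Submodule.span ℂ (s : Set G))))
  have hAmem : ∀ s, A s ∈ E := by
    intro s
    set U := Submodule.span ℂ (s : Set G)
    have : FiniteDimensional ℂ U := by
      apply FiniteDimensional.span_of_finite
      exact s.finite_toSet
    set b := stdOrthonormalBasis ℂ U
    have hP : U.subtypeL.comp (Submodule.orthogonalProjectionOnto U)
        = ∑ i, rankOne ((b i : G)) ((b i : G)) := by
      ext g'
      simp only [ContinuousLinearMap.coe_comp', Function.comp_apply,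
        Submodule.coe_subtypeL', Submodule.coe_subtype, ContinuousLinearMap.coe_sum',
        Finset.sum_apply, rankOne_apply]
      rw [b.orthogonalProjectionOnto_apply_eq_sum]
      push_cast
      rfl
    have : A s = ∑ i, rankOne (T (b i : G)) ((b i : G)) := by
      show T.comp _ = _
      rw [hP]
      ext g'
      simp [rankOne_apply]
    rw [this]
    exact Submodule.sum_mem E fun i _ => hrank _ _
  -- convergence in wot
  have hconv : Filter.Tendsto A Filter.atTop (@nhds _ (wot G H) T) := by
    rw [wot, nhds_iInf, Filter.tendsto_iInf]
    intro p
    rw [nhds_induced, Filter.tendsto_comap_iff]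
    have : ∀ᶠ s in (Filter.atTop : Filter (Finset G)),
        (inner ℂ p.2 (A s p.1) : ℂ) = inner ℂ p.2 (T p.1) := by
      filter_upwards [Filter.eventually_ge_atTop {p.1}] with s hs
      have hmem : p.1 ∈ Submodule.span ℂ (s : Set G) :=
        Submodule.subset_span (hs (Finset.mem_singleton_self p.1))
      have : A s p.1 = T p.1 := by
        show T _ = T p.1
        congr 1
        show (↑(Submodule.orthogonalProjectionOnto (Submodule.span ℂ (s:Set G)) p.1) : G) = p.1
        exact Submodule.starProjection_eq_self_iff.mpr hmem
      rw [this]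
    exact Filter.Tendsto.congr' (this.mono fun s hs => hs.symm) tendsto_const_nhds
  exact wot_mem_of_closed hclosed hconv hAmem
end
end
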